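/- arXiv:2503.21479 — 3 statements merged into one kernel-verified Lean document; each statement's English description precedes it below -/
import Mathlib

section
/- The umlaut information is finite, U(A;B)_ρ < ∞, if and only if there exists a pure state ψ_B = |ψ⟩⟨ψ|_B on H_B such that supp(ρ_A ⊗ ψ_B) ⊆ supp(ρ_{AB}). -/
open scoped Kronecker ComplexOrder Classical
open Matrix

noncomputable section

variable {n a b : Type*} [Fintype n] [DecidableEq n]
  [Fintype a] [DecidableEq a] [Fintype b] [DecidableEq b]

/-- Matrix logarithm via continuous functional calculus. -/
def mlog (A : Matrix n n ℂ) : Matrix n n ℂ := cfc Real.log A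

/-- Matrix exponential via continuous functional calculus. -/
def mexp (A : Matrix n n ℂ) : Matrix n n ℂ := cfc Real.exp A

/-- Matrix real power via continuous functional calculus. -/
def mpow (A : Matrix n n ℂ) (α : ℝ) : Matrix n n ℂ := cfc (fun x : ℝ => x ^ α) A

/-- A density operator: positive semidefinite with unit trace. -/
def IsDensity (ρ : Matrix n n ℂ) : Prop := ρ.PosSemidef ∧ ρ.trace = 1

/-- `supp ρ ⊆ supp σ`, expressed as `ker σ ⊆ ker ρ`. -/
def suppLE (ρ σ : Matrix n n ℂ) : Prop := ∀ v : n → ℂ, σ.mulVec v = 0 → ρ.mulVec v = 0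

/-- Umegaki relative entropy, `+∞` on support violation. -/
def relEntropy (ρ σ : Matrix n n ℂ) : EReal :=
  if suppLE ρ σ then (((ρ * (mlog ρ - mlog σ)).trace.re : ℝ) : EReal) else ⊤

/-- Partial trace over the second (B) factor. -/
def ptraceB (ρ : Matrix (a × b) (a × b) ℂ) : Matrix a a ℂ :=
  Matrix.of fun i j => ∑ k : b, ρ (i, k) (j, k)

/-- Partial trace over the first (A) factor. -/
def ptraceA (ρ : Matrix (a × b) (a × b) ℂ) : Matrix b b ℂ :=
  Matrix.of fun k l => ∑ i : a, ρ (i, k) (i, l)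

/-- Quantum umlaut information `U(A;B)_ρ = min_{σ_B} D(ρ_A ⊗ σ_B ‖ ρ_{AB})`. -/
def umlaut (ρ : Matrix (a × b) (a × b) ℂ) : EReal :=
  ⨅ σ : {σ : Matrix b b ℂ // IsDensity σ}, relEntropy (ptraceB ρ ⊗ₖ σ.1) ρ


-- helper: kronecker mulVec entrywise
lemma kron_mulVec (X : Matrix a a ℂ) (Y : Matrix b b ℂ) (v : a × b → ℂ) (i : a) (k : b) :
    ((X ⊗ₖ Y) *ᵥ v) (i, k) = ∑ j, ∑ l, X i j * Y k l * v (j, l) := by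
  simp [Matrix.mulVec, dotProduct, Fintype.sum_prod_type, kroneckerMap_apply]

set_option maxHeartbeats 800000 in
/-- `U(A;B)_ρ < ∞` iff there is a pure state `|ψ⟩⟨ψ|_B` with
`supp(ρ_A ⊗ |ψ⟩⟨ψ|) ⊆ supp(ρ_{AB})`. -/
theorem umlaut_finite_iff (ρ : Matrix (a × b) (a × b) ℂ) (hρ : IsDensity ρ) :
    umlaut ρ < ⊤ ↔
      ∃ ψ : b → ℂ, (∑ i, ‖ψ i‖ ^ 2 = 1) ∧
        suppLE (ptraceB ρ ⊗ₖ Matrix.vecMulVec ψ (star ψ)) ρ := by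
  constructor
  · intro h
    rw [umlaut, iInf_lt_iff] at h
    obtain ⟨⟨σ, hσ⟩, hlt⟩ := h
    have hsupp : suppLE (ptraceB ρ ⊗ₖ σ) ρ := by
      by_contra hc
      rw [relEntropy, if_neg hc] at hlt
      exact lt_irrefl _ hlt
    have hH : σ.IsHermitian := hσ.1.1
    have hex : ∃ i, hH.eigenvalues i ≠ 0 := by
      by_contra hc
      push_neg at hc
      have hdiag : Matrix.diagonal (RCLike.ofReal ∘ hH.eigenvalues) = (0 : Matrix b b ℂ) := by
        ext i j
        rcases eq_or_ne i j with hij | hij <;>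
          simp [Matrix.diagonal_apply, hij, hc]
      have hzero : σ = 0 := by
        have := hH.spectral_theorem
        rw [hdiag, map_zero] at this
        exact this
      have := hσ.2
      rw [hzero] at this
      simp [Matrix.trace] at this
    obtain ⟨i, hi⟩ := hex
    set ψ : b → ℂ := ⇑(hH.eigenvectorBasis i) with hψ
    refine ⟨ψ, ?_, ?_⟩
    · have h1 : ‖hH.eigenvectorBasis i‖ = 1 := hH.eigenvectorBasis.orthonormal.1 i
      rw [EuclideanSpace.norm_eq] at h1
      exact Real.sqrt_eq_one.mp h1
    · intro v hv
      have h2 : (ptraceB ρ ⊗ₖ σ) *ᵥ v = 0 := hsupp v hv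
      set X := ptraceB ρ with hX
      set w : a → ℂ := fun j => ∑ l, (starRingEnd ℂ) (ψ l) * v (j, l) with hw
      have heig : σ *ᵥ ψ = (hH.eigenvalues i : ℝ) • ψ := hH.mulVec_eigenvectorBasis i
      have hrow : ∀ l, ∑ k, (starRingEnd ℂ) (ψ k) * σ k l
          = (hH.eigenvalues i : ℂ) * (starRingEnd ℂ) (ψ l) := by
        intro l
        have hentry : ∀ k, σ k l = (starRingEnd ℂ) (σ l k) := by
          intro k
          conv_lhs => rw [← hH]
          rfl
        calc ∑ k, (starRingEnd ℂ) (ψ k) * σ k l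
            = (starRingEnd ℂ) (∑ k, σ l k * ψ k) := by
              rw [map_sum]
              exact Finset.sum_congr rfl fun k _ => by rw [hentry k, _root_.map_mul, mul_comm]
          _ = (starRingEnd ℂ) ((σ *ᵥ ψ) l) := rfl
          _ = (hH.eigenvalues i : ℂ) * (starRingEnd ℂ) (ψ l) := by
              rw [heig]
              simp [Pi.smul_apply, Complex.real_smul, _root_.map_mul]
      have hXw : ∀ i0, (X *ᵥ w) i0 = 0 := by
        intro i0
        have key : (hH.eigenvalues i : ℂ) * (X *ᵥ w) i0
            = ∑ k, (starRingEnd ℂ) (ψ k) * ((X ⊗ₖ σ) *ᵥ v) (i0, k) := by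
          calc (hH.eigenvalues i : ℂ) * (X *ᵥ w) i0
              = ∑ j, ∑ l, ((hH.eigenvalues i : ℂ) * (starRingEnd ℂ) (ψ l)) * (X i0 j * v (j, l)) := by
                simp only [Matrix.mulVec, dotProduct, hw, Finset.mul_sum]
                exact Finset.sum_congr rfl fun j _ => Finset.sum_congr rfl fun l _ => by ring
            _ = ∑ j, ∑ l, (∑ k, (starRingEnd ℂ) (ψ k) * σ k l) * (X i0 j * v (j, l)) := by
                exact Finset.sum_congr rfl fun j _ => Finset.sum_congr rfl fun l _ => by
                  rw [hrow l]
            _ = ∑ j, ∑ l, ∑ k, (starRingEnd ℂ) (ψ k) * σ k l * (X i0 j * v (j, l)) := by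
                simp only [Finset.sum_mul]
            _ = ∑ j, ∑ k, ∑ l, (starRingEnd ℂ) (ψ k) * σ k l * (X i0 j * v (j, l)) :=
                Finset.sum_congr rfl fun j _ => Finset.sum_comm
            _ = ∑ k, ∑ j, ∑ l, (starRingEnd ℂ) (ψ k) * σ k l * (X i0 j * v (j, l)) :=
                Finset.sum_comm
            _ = ∑ k, (starRingEnd ℂ) (ψ k) * ∑ j, ∑ l, X i0 j * σ k l * v (j, l) := by
                simp only [Finset.mul_sum]
                exact Finset.sum_congr rfl fun k _ => Finset.sum_congr rfl fun j _ =>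
                  Finset.sum_congr rfl fun l _ => by ring
            _ = ∑ k, (starRingEnd ℂ) (ψ k) * ((X ⊗ₖ σ) *ᵥ v) (i0, k) := by
                exact Finset.sum_congr rfl fun k _ => by rw [kron_mulVec]
        have hzero : (hH.eigenvalues i : ℂ) * (X *ᵥ w) i0 = 0 := by
          rw [key]
          refine Finset.sum_eq_zero fun k _ => ?_
          have hk := congrFun h2 (i0, k)
          rw [Pi.zero_apply] at hk
          rw [hk, mul_zero]
        have hne : (hH.eigenvalues i : ℂ) ≠ 0 := by
          exact_mod_cast Complex.ofReal_ne_zero.mpr hi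
        exact (mul_eq_zero.mp hzero).resolve_left hne
      funext p
      obtain ⟨i0, k⟩ := p
      rw [kron_mulVec]
      have : ∑ j, ∑ l, X i0 j * Matrix.vecMulVec ψ (star ψ) k l * v (j, l)
          = ψ k * (X *ᵥ w) i0 := by
        simp only [Matrix.mulVec, dotProduct, hw, Finset.mul_sum, vecMulVec_apply,
          Pi.star_apply, Complex.star_def]
        exact Finset.sum_congr rfl fun j _ => Finset.sum_congr rfl fun l _ => by ring
      rw [this, hXw i0, mul_zero, Pi.zero_apply]
  · rintro ⟨ψ, hnorm, hsupp⟩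
    have hdens : IsDensity (Matrix.vecMulVec ψ (star ψ)) := by
      constructor
      · rw [Matrix.posSemidef_iff_dotProduct_mulVec]
        constructor
        · ext i j
          simp [conjTranspose_apply, vecMulVec_apply, mul_comm]
        · intro x
          have : star x ⬝ᵥ (Matrix.vecMulVec ψ (star ψ) *ᵥ x)
              = (starRingEnd ℂ) (∑ l, (starRingEnd ℂ) (ψ l) * x l) * (∑ l, (starRingEnd ℂ) (ψ l) * x l) := by
            simp only [Matrix.mulVec, dotProduct, vecMulVec_apply, Pi.star_apply,
              map_sum, _root_.map_mul, Complex.star_def, RingHomCompTriple.comp_apply,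
              RingHom.id_apply, Finset.mul_sum, Finset.sum_mul, starRingEnd_self_apply]
            rw [Finset.sum_comm]
            apply Finset.sum_congr rfl; intro l _
            apply Finset.sum_congr rfl; intro k _
            ring
          rw [this, mul_comm, Complex.mul_conj]
          exact Complex.zero_le_real.mpr (Complex.normSq_nonneg _)
      · have : (Matrix.vecMulVec ψ (star ψ)).trace = ((∑ i, ‖ψ i‖ ^ 2 : ℝ) : ℂ) := by
          simp only [Matrix.trace, Matrix.diag, vecMulVec_apply, Pi.star_apply, Complex.ofReal_sum]
          apply Finset.sum_congr rfl; intro i _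
          rw [Complex.star_def, Complex.mul_conj, Complex.normSq_eq_norm_sq]
        rw [this, hnorm, Complex.ofReal_one]
    have hle : umlaut ρ ≤ relEntropy (ptraceB ρ ⊗ₖ Matrix.vecMulVec ψ (star ψ)) ρ := by
      rw [umlaut]
      exact iInf_le (fun σ : {σ : Matrix b b ℂ // IsDensity σ} =>
        relEntropy (ptraceB ρ ⊗ₖ σ.1) ρ) ⟨Matrix.vecMulVec ψ (star ψ), hdens⟩
    rw [relEntropy, if_pos hsupp] at hle
    exact lt_of_le_of_lt hle (EReal.coe_lt_top _)


end
end

section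
/- Closed form for the quantum umlaut information: for a bipartite state ρ_{AB} with full support, U(A;B)_ρ = −S(ρ_A) − log Tr[exp(Tr_A[(ρ_A ⊗ 1_B) log ρ_{AB}])]. Moreover, the unique minimizer of σ_B ↦ D(ρ_A ⊗ σ_B ‖ ρ_{AB}) is the umlaut-marginal ρ̈_B := exp(X_B)/Tr[exp(X_B)], where X_B = Tr_A[(ρ_A ⊗ 1_B) log ρ_{AB}]. -/
open scoped Kronecker ComplexOrder Classical
open Matrix

noncomputable section

variable {n a b : Type*} [Fintype n] [DecidableEq n]
  [Fintype a] [DecidableEq a] [Fintype b] [DecidableEq b]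

/-- The operator `X_B = Tr_A[(ρ_A ⊗ 1_B) log ρ_{AB}]`. -/
def Xop (ρ : Matrix (a × b) (a × b) ℂ) : Matrix b b ℂ :=
  ptraceA ((ptraceB ρ ⊗ₖ (1 : Matrix b b ℂ)) * mlog ρ)

/-- The umlaut-marginal `ρ̈_B = exp(X_B)/Tr[exp(X_B)]`. -/
def umlautMarginal (ρ : Matrix (a × b) (a × b) ℂ) : Matrix b b ℂ :=
  (((mexp (Xop ρ)).trace.re)⁻¹ : ℝ) • mexp (Xop ρ)


lemma unit_det {U : Matrix n n ℂ} (hU : U ∈ Matrix.unitaryGroup n ℂ) : IsUnit U := by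
  exact (Unitary.toUnits ⟨U, hU⟩ : (Matrix n n ℂ)ˣ).isUnit

lemma herm_conj (U : Matrix n n ℂ) (d : n → ℝ) :
    (U * diagonal (Complex.ofReal ∘ d) * Uᴴ).IsHermitian := by
  unfold Matrix.IsHermitian
  simp only [conjTranspose_mul, conjTranspose_conjTranspose, diagonal_conjTranspose, mul_assoc]
  congr 2
  ext i j
  simp [diagonal, Pi.star_def, Function.comp]

lemma spectrum_conj_subset (U : Matrix n n ℂ) (hU : U ∈ Matrix.unitaryGroup n ℂ) (d : n → ℝ) :
    spectrum ℝ (U * diagonal (Complex.ofReal ∘ d) * Uᴴ) ⊆ Set.range d := by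
  have hUU : U * Uᴴ = 1 := by
    have := Matrix.mem_unitaryGroup_iff.mp hU
    rwa [star_eq_conjTranspose] at this
  intro x hx
  by_contra hxr
  apply spectrum.notMem_iff.mpr ?_ hx
  have : algebraMap ℝ (Matrix n n ℂ) x - U * diagonal (Complex.ofReal ∘ d) * Uᴴ
      = U * diagonal (fun i => (x : ℂ) - (d i : ℂ)) * Uᴴ := by
    have h1 : algebraMap ℝ (Matrix n n ℂ) x = U * (diagonal (fun _ => (x:ℂ))) * Uᴴ := by
      rw [← Matrix.smul_one_eq_diagonal]
      rw [mul_smul_comm, smul_mul_assoc, mul_one, hUU]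
      ext i j
      simp [Matrix.algebraMap_eq_diagonal, Pi.algebraMap_apply, Algebra.algebraMap_eq_smul_one,
        Matrix.smul_apply, Matrix.one_apply, Complex.real_smul]
    rw [h1, ← sub_mul, ← mul_sub, diagonal_sub]
    simp [Function.comp]
  rw [this]
  rw [Matrix.isUnit_iff_isUnit_det]
  apply isUnit_iff_ne_zero.mpr
  simp only [det_mul]
  refine mul_ne_zero (mul_ne_zero ((Matrix.isUnit_iff_isUnit_det U).mp (unit_det hU)).ne_zero ?_) ?_
  · rw [det_diagonal]
    apply Finset.prod_ne_zero_iff.mpr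
    intro i _ h
    rw [sub_eq_zero] at h
    exact hxr ⟨i, by exact_mod_cast h.symm⟩
  · have : IsUnit (Uᴴ) := by
      rw [← star_eq_conjTranspose]
      exact (Unitary.toUnits ⟨U, hU⟩)⁻¹.isUnit
    exact ((Matrix.isUnit_iff_isUnit_det _).mp this).ne_zero


lemma conj_mul_conj {U : Matrix n n ℂ} (hUU' : Uᴴ * U = 1) (A B : Matrix n n ℂ) :
    (U * A * Uᴴ) * (U * B * Uᴴ) = U * (A * B) * Uᴴ := by
  simp only [mul_assoc]
  rw [← mul_assoc Uᴴ U, hUU', one_mul]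

lemma cfc_poly_conj (U : Matrix n n ℂ) (hUU : U * Uᴴ = 1) (hUU' : Uᴴ * U = 1)
    (d : n → ℝ) (p : Polynomial ℝ) :
    cfc (fun x => p.eval x) (U * diagonal (Complex.ofReal ∘ d) * Uᴴ)
      = U * diagonal (Complex.ofReal ∘ fun i => p.eval (d i)) * Uᴴ := by
  set M := U * diagonal (Complex.ofReal ∘ d) * Uᴴ with hMdef
  have hM : M.IsHermitian := by
    unfold Matrix.IsHermitian
    simp only [hMdef, conjTranspose_mul, conjTranspose_conjTranspose, diagonal_conjTranspose,
      mul_assoc]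
    congr 2
    ext i j
    simp [diagonal, Pi.star_def, Function.comp]
  have hpow : ∀ k : ℕ, M ^ k = U * (diagonal (Complex.ofReal ∘ d)) ^ k * Uᴴ := by
    intro k
    induction k with
    | zero => simp [hUU]
    | succ k ih => rw [pow_succ, pow_succ, ih, hMdef, conj_mul_conj hUU']
  have h1 : (fun x : ℝ => p.eval x)
      = ∑ k ∈ Finset.range (p.natDegree + 1), (fun x : ℝ => p.coeff k * x ^ k) := by
    funext x
    rw [Finset.sum_apply]
    exact Polynomial.eval_eq_sum_range x
  rw [h1]
  rw [cfc_sum _ _ _ (fun k _ => by fun_prop)]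
  have h2 : ∀ k ∈ Finset.range (p.natDegree + 1),
      cfc (fun x : ℝ => p.coeff k * x ^ k) M = p.coeff k • M ^ k := by
    intro k _
    rw [cfc_const_mul _ _ _ (by fun_prop)]
    exact congrArg (p.coeff k • ·) (cfc_pow_id M k hM)
  rw [Finset.sum_congr rfl h2]
  have h3 : ∀ k, p.coeff k • M ^ k
      = U * (p.coeff k • diagonal (fun i => ((d i : ℂ)) ^ k)) * Uᴴ := by
    intro k
    rw [hpow, diagonal_pow]
    rw [mul_smul_comm, smul_mul_assoc]
    congr 3
  simp_rw [h3, ← Finset.sum_mul, ← Finset.mul_sum]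
  congr 2
  have : ∀ k : ℕ, p.coeff k • diagonal (fun i => ((d i : ℂ)) ^ k)
      = diagonal (fun i => ((p.coeff k * (d i) ^ k : ℝ) : ℂ)) := by
    intro k
    ext i j
    by_cases h : i = j <;>
      simp [h, diagonal, Complex.real_smul, Pi.smul_apply, mul_comm, push_cast]
  simp_rw [this]
  ext i j
  by_cases h : i = j
  · subst h
    simp only [Matrix.sum_apply, diagonal_apply_eq, Function.comp]
    rw [Polynomial.eval_eq_sum_range (d i)]
    push_cast
    rfl
  · simp [Matrix.sum_apply, diagonal_apply_ne _ h]

lemma cfc_conj_diagonal (U : Matrix n n ℂ) (hUU : U * Uᴴ = 1) (hUU' : Uᴴ * U = 1)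
    (d : n → ℝ) (f : ℝ → ℝ) :
    cfc f (U * diagonal (Complex.ofReal ∘ d) * Uᴴ)
      = U * diagonal (Complex.ofReal ∘ f ∘ d) * Uᴴ := by
  classical
  set p := Lagrange.interpolate (Finset.univ.image d) id f with hpdef
  have hp : ∀ i : n, p.eval (d i) = f (d i) := by
    intro i
    have := Lagrange.eval_interpolate_at_node (v := id) (r := f)
      (s := Finset.univ.image d) (i := d i) (Set.injOn_id _)
      (Finset.mem_image_of_mem d (Finset.mem_univ i))
    exact this
  have hU : U ∈ Matrix.unitaryGroup n ℂ := by
    rw [Matrix.mem_unitaryGroup_iff, star_eq_conjTranspose]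
    exact hUU
  have hcongr : cfc f (U * diagonal (Complex.ofReal ∘ d) * Uᴴ)
      = cfc (fun x => p.eval x) (U * diagonal (Complex.ofReal ∘ d) * Uᴴ) := by
    apply cfc_congr
    intro x hx
    obtain ⟨i, rfl⟩ := spectrum_conj_subset U hU d hx
    exact (hp i).symm
  rw [hcongr, cfc_poly_conj U hUU hUU' d p]
  have hfun : (Complex.ofReal ∘ fun i => p.eval (d i)) = Complex.ofReal ∘ f ∘ d := by
    funext i
    exact congrArg _ (hp i)
  rw [hfun]


lemma sum_comm3 {α β γ : Type*} [Fintype α] [Fintype β] [Fintype γ] (f : α → β → γ → ℂ) :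
    ∑ x : α, ∑ y : β, ∑ z : γ, f x y z = ∑ z : γ, ∑ y : β, ∑ x : α, f x y z := by
  trans ∑ x : α, ∑ z : γ, ∑ y : β, f x y z
  · exact Finset.sum_congr rfl fun x _ => Finset.sum_comm
  trans ∑ z : γ, ∑ x : α, ∑ y : β, f x y z
  · exact Finset.sum_comm
  · exact Finset.sum_congr rfl fun z _ => Finset.sum_comm

lemma sum_rot3 {α β γ : Type*} [Fintype α] [Fintype β] [Fintype γ] (f : α → β → γ → ℂ) :
    ∑ x : α, ∑ y : β, ∑ z : γ, f x y z = ∑ y : β, ∑ z : γ, ∑ x : α, f x y z := by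
  trans ∑ y : β, ∑ x : α, ∑ z : γ, f x y z
  · exact Finset.sum_comm
  · exact Finset.sum_congr rfl fun y _ => Finset.sum_comm

lemma sum_rot3' {α β γ : Type*} [Fintype α] [Fintype β] [Fintype γ] (f : α → β → γ → ℂ) :
    ∑ x : α, ∑ y : β, ∑ z : γ, f x y z = ∑ z : γ, ∑ x : α, ∑ y : β, f x y z := by
  trans ∑ x : α, ∑ z : γ, ∑ y : β, f x y z
  · exact Finset.sum_congr rfl fun x _ => Finset.sum_comm
  · exact Finset.sum_comm

lemma kron_conjTranspose (A : Matrix a a ℂ) (B : Matrix b b ℂ) :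
    (A ⊗ₖ B)ᴴ = Aᴴ ⊗ₖ Bᴴ := by
  ext ⟨i, k⟩ ⟨j, l⟩
  simp [conjTranspose_apply, kroneckerMap_apply, _root_.map_mul]

lemma trace_conj_diag (U : Matrix n n ℂ) (hUU' : Uᴴ * U = 1) (c : n → ℂ) :
    (U * diagonal c * Uᴴ).trace = ∑ i, c i := by
  rw [trace_mul_cycle, hUU', Matrix.one_mul, trace_diagonal]

lemma trace_one_kron (σ : Matrix b b ℂ) (M : Matrix (a × b) (a × b) ℂ) :
    (((1 : Matrix a a ℂ) ⊗ₖ σ) * M).trace = (σ * ptraceA M).trace := by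
  have hentry : ∀ (i : a) (k : b), (((1 : Matrix a a ℂ) ⊗ₖ σ) * M) (i,k) (i,k)
      = ∑ k' : b, σ k k' * M (i,k') (i,k) := by
    intro i k
    rw [Matrix.mul_apply, Fintype.sum_prod_type]
    simp [Matrix.one_apply, ite_mul, zero_mul, Finset.sum_ite_eq]
  have hL : (((1 : Matrix a a ℂ) ⊗ₖ σ) * M).trace
      = ∑ i : a, ∑ k : b, ∑ k' : b, σ k k' * M (i,k') (i,k) := by
    rw [Matrix.trace, Fintype.sum_prod_type]
    exact Finset.sum_congr rfl fun i _ => Finset.sum_congr rfl fun k _ => hentry i k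
  have hR : (σ * ptraceA M).trace
      = ∑ k : b, ∑ k' : b, ∑ i : a, σ k k' * M (i,k') (i,k) := by
    simp only [Matrix.trace, Matrix.diag, Matrix.mul_apply, ptraceA, Matrix.of_apply,
      Finset.mul_sum]
  rw [hL, hR, sum_rot3 (fun i k k' => σ k k' * M (i,k') (i,k))]

lemma ptraceB_trace (ρ : Matrix (a × b) (a × b) ℂ) : (ptraceB ρ).trace = ρ.trace := by
  simp only [Matrix.trace, Matrix.diag, ptraceB, Matrix.of_apply]
  rw [← Finset.sum_product']
  exact Finset.sum_congr rfl fun _ _ => rfl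

lemma posdef_mulVec_eq_zero {ρ : Matrix n n ℂ} (hρ : ρ.PosDef) {v : n → ℂ}
    (hv : ρ.mulVec v = 0) : v = 0 := by
  by_contra h
  have := hρ.dotProduct_mulVec_pos h
  rw [hv, dotProduct_zero] at this
  exact lt_irrefl _ this

lemma ptraceB_posDef {ρ : Matrix (a × b) (a × b) ℂ} [Nonempty b] (hρ : ρ.PosDef) :
    (ptraceB ρ).PosDef := by
  refine Matrix.PosDef.of_dotProduct_mulVec_pos ?_ ?_
  · ext i j
    simp only [ptraceB, conjTranspose_apply, Matrix.of_apply, Complex.star_def, map_sum]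
    refine Finset.sum_congr rfl fun k _ => ?_
    have := congrFun (congrFun hρ.1 (i,k)) (j,k)
    rw [conjTranspose_apply] at this
    exact this
  · intro v hv
    set w : b → (a × b) → ℂ := fun k p => if p.2 = k then v p.1 else 0 with hw
    have key : star v ⬝ᵥ (ptraceB ρ) *ᵥ v = ∑ k : b, star (w k) ⬝ᵥ ρ *ᵥ (w k) := by
      simp only [dotProduct, mulVec, ptraceB, Matrix.of_apply, hw, Pi.star_apply,
        Fintype.sum_prod_type, apply_ite (star : ℂ → ℂ), star_zero, ite_mul, zero_mul, mul_ite, mul_zero,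
        Finset.sum_ite_eq', Finset.mem_univ, if_true, Finset.mul_sum, Finset.sum_mul]
      trans ∑ i : b, ∑ x : a, ∑ x1 : a, star (v x) * (ρ (x,i) (x1,i) * v x1)
      · exact sum_rot3' (fun x x1 i => star (v x) * (ρ (x,i) (x1,i) * v x1))
      · apply Finset.sum_congr rfl
        intro k _
        apply Finset.sum_congr rfl
        intro x1 _
        rw [Finset.sum_comm]
        simp [Finset.sum_ite_eq']
    have hpos : ∀ k : b, 0 ≤ star (w k) ⬝ᵥ ρ *ᵥ (w k) := fun k =>
      hρ.posSemidef.dotProduct_mulVec_nonneg (w k)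
    obtain ⟨i0, hi0⟩ : ∃ i0, v i0 ≠ 0 := Function.ne_iff.mp hv
    inhabit b
    have hk0 : star (w default) ⬝ᵥ ρ *ᵥ (w default) > 0 := by
      apply hρ.dotProduct_mulVec_pos
      intro h
      apply hi0
      have := congrFun h (i0, default)
      simpa [hw] using this
    rw [key]
    exact Finset.sum_pos' (fun k _ => hpos k) ⟨default, Finset.mem_univ _, hk0⟩


lemma trace_conj (V : Matrix n n ℂ) (hV' : Vᴴ * V = 1) (Z : Matrix n n ℂ) :
    (V * Z * Vᴴ).trace = Z.trace := by
  rw [trace_mul_cycle, hV', Matrix.one_mul]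

lemma mem_unitary_pair {U : Matrix n n ℂ} (hU : U ∈ Matrix.unitaryGroup n ℂ) :
    U * Uᴴ = 1 ∧ Uᴴ * U = 1 := by
  constructor
  · have := Matrix.mem_unitaryGroup_iff.mp hU
    rwa [star_eq_conjTranspose] at this
  · have := Matrix.mem_unitaryGroup_iff'.mp hU
    rwa [star_eq_conjTranspose] at this

/-- cfc of a Hermitian matrix in terms of its eigendecomposition. -/
lemma cfc_herm {A : Matrix n n ℂ} (hA : A.IsHermitian) (f : ℝ → ℝ) :
    cfc f A = (hA.eigenvectorUnitary : Matrix n n ℂ)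
        * diagonal (Complex.ofReal ∘ f ∘ hA.eigenvalues)
        * (hA.eigenvectorUnitary : Matrix n n ℂ)ᴴ := by
  obtain ⟨hUU, hUU'⟩ := mem_unitary_pair (hA.eigenvectorUnitary).2
  conv_lhs => rw [hA.spectral_theorem]
  rw [← star_eq_conjTranspose] at hUU hUU' ⊢
  exact cfc_conj_diagonal _ (by rwa [star_eq_conjTranspose] at hUU)
    (by rwa [star_eq_conjTranspose] at hUU') _ f

/-- entries of Xop -/
lemma Xop_apply (ρ : Matrix (a × b) (a × b) ℂ) (k l : b) :
    Xop ρ k l = ∑ i : a, ∑ j : a, (ptraceB ρ) i j * (mlog ρ) (j, k) (i, l) := by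
  simp only [Xop, ptraceA, Matrix.of_apply]
  apply Finset.sum_congr rfl
  intro i _
  rw [Matrix.mul_apply, Fintype.sum_prod_type]
  apply Finset.sum_congr rfl
  intro j _
  simp [kroneckerMap_apply, Matrix.one_apply, ite_mul, zero_mul, mul_ite, mul_zero,
    Finset.sum_ite_eq, Finset.sum_ite_eq']

lemma Xop_isHermitian {ρ : Matrix (a × b) (a × b) ℂ} (hρ : ρ.IsHermitian)
    (hA : (ptraceB ρ).IsHermitian) : (Xop ρ).IsHermitian := by
  have hL : (mlog ρ).IsHermitian := cfc_predicate Real.log ρ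
  ext k l
  rw [conjTranspose_apply, Xop_apply, Xop_apply]
  calc star (∑ i : a, ∑ j : a, (ptraceB ρ) i j * (mlog ρ) (j, l) (i, k))
      = ∑ i : a, ∑ j : a, star ((ptraceB ρ) i j) * star ((mlog ρ) (j, l) (i, k)) := by
        simp [star_sum, star_mul']
    _ = ∑ i : a, ∑ j : a, (ptraceB ρ) j i * (mlog ρ) (i, k) (j, l) := by
        refine Finset.sum_congr rfl fun i _ => Finset.sum_congr rfl fun j _ => ?_
        have h1 : star ((ptraceB ρ) i j) = (ptraceB ρ) j i := by
          have := congrFun (congrFun hA j) i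
          rwa [conjTranspose_apply] at this
        have h2 : star ((mlog ρ) (j, l) (i, k)) = (mlog ρ) (i, k) (j, l) := by
          have := congrFun (congrFun hL (i, k)) (j, l)
          rwa [conjTranspose_apply] at this
        rw [h1, h2]
    _ = ∑ i : a, ∑ j : a, (ptraceB ρ) i j * (mlog ρ) (j, k) (i, l) := Finset.sum_comm

/-- Claim B: `Tr[(ρ_A ⊗ σ) log ρ] = Tr[σ X]`. -/
lemma trace_kron_mlog (ρ : Matrix (a × b) (a × b) ℂ) (σ : Matrix b b ℂ) :
    ((ptraceB ρ ⊗ₖ σ) * mlog ρ).trace = (σ * Xop ρ).trace := by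
  have h : ptraceB ρ ⊗ₖ σ = ((1 : Matrix a a ℂ) ⊗ₖ σ) * (ptraceB ρ ⊗ₖ (1 : Matrix b b ℂ)) := by
    rw [← Matrix.mul_kronecker_mul, Matrix.one_mul, Matrix.mul_one]
  rw [h, Matrix.mul_assoc, trace_one_kron]
  rfl

/-- trace of product of two conjugated diagonals with different unitaries. -/
lemma trace_two_conj (V W : Matrix n n ℂ) (hVV : V * Vᴴ = 1) (hVV' : Vᴴ * V = 1)
    (hWW : W * Wᴴ = 1) (q x : n → ℝ) :
    ((V * diagonal (Complex.ofReal ∘ q) * Vᴴ) * (W * diagonal (Complex.ofReal ∘ x) * Wᴴ)).trace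
      = ((∑ j, ∑ m, q j * x m * Complex.normSq ((Vᴴ * W) j m) : ℝ) : ℂ) := by
  set T := Vᴴ * W with hT
  have hstep : (V * diagonal (Complex.ofReal ∘ q) * Vᴴ) * (W * diagonal (Complex.ofReal ∘ x) * Wᴴ)
      = V * (diagonal (Complex.ofReal ∘ q) * T * diagonal (Complex.ofReal ∘ x) * Tᴴ) * Vᴴ := by
    simp only [hT, conjTranspose_mul, conjTranspose_conjTranspose]
    simp only [Matrix.mul_assoc]
    congr 2
    rw [hVV, Matrix.mul_one]
  rw [hstep, trace_conj V hVV']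
  have hM : diagonal (Complex.ofReal ∘ q) * T * diagonal (Complex.ofReal ∘ x)
      = Matrix.of (fun j m => (q j : ℂ) * T j m * (x m : ℂ)) := by
    ext j m
    simp [Matrix.diagonal_mul, Matrix.mul_diagonal]
  rw [hM]
  have : (Matrix.of (fun j m => (q j : ℂ) * T j m * (x m : ℂ)) * Tᴴ).trace
      = ∑ j, ∑ m, (q j : ℂ) * T j m * (x m : ℂ) * star (T j m) := by
    simp [Matrix.trace, Matrix.diag, Matrix.mul_apply, conjTranspose_apply]
  rw [this]
  push_cast
  refine Finset.sum_congr rfl fun j _ => Finset.sum_congr rfl fun m _ => ?_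
  calc (q j : ℂ) * T j m * (x m : ℂ) * star (T j m)
      = (q j : ℂ) * (x m : ℂ) * (T j m * star (T j m)) := by ring
    _ = (q j : ℂ) * (x m : ℂ) * (Complex.normSq (T j m) : ℂ) := by
        congr 1
        rw [← Complex.mul_conj]
        rfl
    _ = _ := by ring

lemma mexp_trace {A : Matrix n n ℂ} (hA : A.IsHermitian) :
    (mexp A).trace = ((∑ i, Real.exp (hA.eigenvalues i) : ℝ) : ℂ) := by
  have h2 := (mem_unitary_pair hA.eigenvectorUnitary.2).2
  rw [mexp, cfc_herm hA, trace_conj_diag _ h2, Complex.ofReal_sum]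
  rfl

lemma trace_mul_mlog (V : Matrix n n ℂ) (hVV : V * Vᴴ = 1) (hVV' : Vᴴ * V = 1) (d : n → ℝ) :
    ((V * diagonal (Complex.ofReal ∘ d) * Vᴴ) * mlog (V * diagonal (Complex.ofReal ∘ d) * Vᴴ)).trace
      = ((∑ i, d i * Real.log (d i) : ℝ) : ℂ) := by
  rw [mlog, cfc_conj_diagonal V hVV hVV' d Real.log, conj_mul_conj hVV',
    diagonal_mul_diagonal, trace_conj_diag _ hVV']
  push_cast
  rfl

lemma kron_conj_decomp (U : Matrix a a ℂ) (V : Matrix b b ℂ) (p : a → ℝ) (q : b → ℝ) :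
    (U * diagonal (Complex.ofReal ∘ p) * Uᴴ) ⊗ₖ (V * diagonal (Complex.ofReal ∘ q) * Vᴴ)
      = (U ⊗ₖ V) * diagonal (Complex.ofReal ∘ fun ij : a × b => p ij.1 * q ij.2)
          * (U ⊗ₖ V)ᴴ := by
  rw [Matrix.mul_kronecker_mul, Matrix.mul_kronecker_mul, kron_conjTranspose,
    Matrix.diagonal_kronecker_diagonal]
  have hfun : (fun mn : a × b => ((Complex.ofReal ∘ p) mn.1) * ((Complex.ofReal ∘ q) mn.2))
      = Complex.ofReal ∘ fun ij : a × b => p ij.1 * q ij.2 := by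
    funext mn
    simp
  rw [hfun]

lemma kron_unitary {U : Matrix a a ℂ} {V : Matrix b b ℂ} (hU : U * Uᴴ = 1) (hV : V * Vᴴ = 1) :
    (U ⊗ₖ V) * (U ⊗ₖ V)ᴴ = 1 := by
  rw [kron_conjTranspose, ← Matrix.mul_kronecker_mul, hU, hV, Matrix.one_kronecker_one]

lemma kron_unitary' {U : Matrix a a ℂ} {V : Matrix b b ℂ} (hU : Uᴴ * U = 1) (hV : Vᴴ * V = 1) :
    (U ⊗ₖ V)ᴴ * (U ⊗ₖ V) = 1 := by
  rw [kron_conjTranspose, ← Matrix.mul_kronecker_mul, hU, hV, Matrix.one_kronecker_one]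

lemma klein_le {q r : ℝ} (hq : 0 ≤ q) (hr : 0 < r) :
    q - r ≤ q * (Real.log q - Real.log r) := by
  rcases eq_or_lt_of_le hq with h | h
  · simp [← h]
    linarith
  · have hlog := Real.log_le_sub_one_of_pos (show 0 < r / q from div_pos hr h)
    rw [Real.log_div hr.ne' h.ne'] at hlog
    have := mul_le_mul_of_nonneg_left hlog (le_of_lt h)
    rw [mul_sub] at this
    have h2 : q * (r / q) = r := by field_simp
    nlinarith

lemma klein_eq {q r : ℝ} (hq : 0 ≤ q) (hr : 0 < r)
    (h : q * (Real.log q - Real.log r) - (q - r) = 0) : q = r := by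
  rcases eq_or_lt_of_le hq with h0 | h0
  · exfalso
    rw [← h0] at h
    simp at h
    linarith
  · by_contra hne
    have hlog := Real.log_lt_sub_one_of_pos (show 0 < r / q from div_pos hr h0)
      (by
        intro hc
        apply hne
        field_simp at hc
        linarith)
    rw [Real.log_div hr.ne' h0.ne'] at hlog
    have := mul_lt_mul_of_pos_left hlog h0
    rw [mul_sub] at this
    have h2 : q * (r / q) = r := by field_simp
    nlinarith

section Grand
variable {ρ : Matrix (a × b) (a × b) ℂ}

/-- The grand value formula. -/
lemma grand [Nonempty a] [Nonempty b] (hρ : ρ.PosDef) (htr : ρ.trace = 1)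
    (hX : (Xop ρ).IsHermitian)
    (V : Matrix b b ℂ) (hVV : V * Vᴴ = 1) (hVV' : Vᴴ * V = 1)
    (q : b → ℝ) (hq : ∀ j, 0 ≤ q j) (hq1 : ∑ j, q j = 1) :
    ((ptraceB ρ ⊗ₖ (V * diagonal (Complex.ofReal ∘ q) * Vᴴ))
        * (mlog (ptraceB ρ ⊗ₖ (V * diagonal (Complex.ofReal ∘ q) * Vᴴ)) - mlog ρ)).trace.re
      = ((ptraceB ρ * mlog (ptraceB ρ)).trace.re - Real.log ((mexp (Xop ρ)).trace.re))
        + ∑ j, ∑ m, Complex.normSq ((Vᴴ * (hX.eigenvectorUnitary : Matrix b b ℂ)) j m)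
            * (q j * (Real.log (q j)
                - Real.log (Real.exp (hX.eigenvalues m) / (mexp (Xop ρ)).trace.re))
              - (q j - Real.exp (hX.eigenvalues m) / (mexp (Xop ρ)).trace.re)) := by
  classical
  -- eigen-data of ρ_A
  have hApd : (ptraceB ρ).PosDef := ptraceB_posDef hρ
  have hAH : (ptraceB ρ).IsHermitian := hApd.1
  set U : Matrix a a ℂ := (hAH.eigenvectorUnitary : Matrix a a ℂ) with hUdef
  set p : a → ℝ := hAH.eigenvalues with hpdef
  obtain ⟨hUU, hUU'⟩ := mem_unitary_pair hAH.eigenvectorUnitary.2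
  have hAspec : ptraceB ρ = U * diagonal (Complex.ofReal ∘ p) * Uᴴ := hAH.spectral_theorem
  have hppos : ∀ i, 0 < p i := fun i => hApd.eigenvalues_pos i
  -- eigen-data of X
  set W : Matrix b b ℂ := (hX.eigenvectorUnitary : Matrix b b ℂ) with hWdef
  set x : b → ℝ := hX.eigenvalues with hxdef
  obtain ⟨hWW, hWW'⟩ := mem_unitary_pair hX.eigenvectorUnitary.2
  have hXspec : Xop ρ = W * diagonal (Complex.ofReal ∘ x) * Wᴴ := hX.spectral_theorem
  -- Z
  set Z : ℝ := ∑ m, Real.exp (x m) with hZdef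
  have hZtr : (mexp (Xop ρ)).trace = (Z : ℂ) := mexp_trace hX
  have hZre : (mexp (Xop ρ)).trace.re = Z := by rw [hZtr]; exact Complex.ofReal_re Z
  have hZpos : 0 < Z := Finset.sum_pos (fun m _ => Real.exp_pos (x m)) Finset.univ_nonempty
  -- sum of p = 1
  have hp1 : ∑ i, p i = 1 := by
    have h1 : (ptraceB ρ).trace = 1 := by rw [ptraceB_trace, htr]
    rw [hAspec, trace_conj_diag _ hUU'] at h1
    have : ((∑ i, p i : ℝ) : ℂ) = 1 := by rw [Complex.ofReal_sum]; exact h1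
    exact_mod_cast this
  -- the doubly stochastic matrix P
  set T : Matrix b b ℂ := Vᴴ * W with hTdef
  have hTT : T * Tᴴ = 1 := by
    rw [hTdef, conjTranspose_mul, conjTranspose_conjTranspose, Matrix.mul_assoc,
      ← Matrix.mul_assoc W, hWW, Matrix.one_mul, hVV']
  have hTT' : Tᴴ * T = 1 := by
    rw [hTdef, conjTranspose_mul, conjTranspose_conjTranspose, Matrix.mul_assoc,
      ← Matrix.mul_assoc V, hVV, Matrix.one_mul, hWW']
  have hProw : ∀ j, ∑ m, Complex.normSq (T j m) = 1 := by
    intro j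
    have := congrFun (congrFun hTT j) j
    rw [Matrix.mul_apply, Matrix.one_apply_eq] at this
    have h2 : ((∑ m, Complex.normSq (T j m) : ℝ) : ℂ) = 1 := by
      rw [Complex.ofReal_sum]
      rw [← this]
      exact Finset.sum_congr rfl fun m _ => by
        rw [conjTranspose_apply, ← Complex.mul_conj]
        rfl
    exact_mod_cast h2
  have hPcol : ∀ m, ∑ j, Complex.normSq (T j m) = 1 := by
    intro m
    have := congrFun (congrFun hTT' m) m
    rw [Matrix.mul_apply, Matrix.one_apply_eq] at this
    have h2 : ((∑ j, Complex.normSq (T j m) : ℝ) : ℂ) = 1 := by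
      rw [Complex.ofReal_sum]
      rw [← this]
      exact Finset.sum_congr rfl fun j _ => by
        rw [conjTranspose_apply, mul_comm, ← Complex.mul_conj]
        rfl
    exact_mod_cast h2
  -- term 1 : entropy of the kronecker product
  set σ : Matrix b b ℂ := V * diagonal (Complex.ofReal ∘ q) * Vᴴ with hσdef
  have hkron : ptraceB ρ ⊗ₖ σ = (U ⊗ₖ V)
      * diagonal (Complex.ofReal ∘ fun ij : a × b => p ij.1 * q ij.2) * (U ⊗ₖ V)ᴴ := by
    rw [hσdef]
    conv_lhs => rw [hAspec]
    exact kron_conj_decomp U V p q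
  have hKK : (U ⊗ₖ V) * (U ⊗ₖ V)ᴴ = 1 := kron_unitary hUU hVV
  have hKK' : (U ⊗ₖ V)ᴴ * (U ⊗ₖ V) = 1 := kron_unitary' hUU' hVV'
  have term1 : ((ptraceB ρ ⊗ₖ σ) * mlog (ptraceB ρ ⊗ₖ σ)).trace.re
      = ∑ ij : a × b, (p ij.1 * q ij.2) * Real.log (p ij.1 * q ij.2) := by
    rw [hkron, trace_mul_mlog _ hKK hKK']
    exact Complex.ofReal_re _
  have split1 : ∑ ij : a × b, (p ij.1 * q ij.2) * Real.log (p ij.1 * q ij.2)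
      = (∑ i, p i * Real.log (p i)) + ∑ j, q j * Real.log (q j) := by
    rw [Fintype.sum_prod_type]
    have hterm : ∀ (i : a) (j : b), (p i * q j) * Real.log (p i * q j)
        = q j * (p i * Real.log (p i)) + p i * (q j * Real.log (q j)) := by
      intro i j
      rcases eq_or_lt_of_le (hq j) with h0 | h0
      · rw [← h0]; simp
      · rw [Real.log_mul (hppos i).ne' h0.ne']
        ring
    calc ∑ i, ∑ j, (p i * q j) * Real.log (p i * q j)
        = ∑ i, ∑ j, (q j * (p i * Real.log (p i)) + p i * (q j * Real.log (q j))) :=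
          Finset.sum_congr rfl fun i _ => Finset.sum_congr rfl fun j _ => hterm i j
      _ = ∑ i, ((p i * Real.log (p i)) + p i * ∑ j, (q j * Real.log (q j))) := by
          refine Finset.sum_congr rfl fun i _ => ?_
          rw [Finset.sum_add_distrib, ← Finset.sum_mul, ← Finset.mul_sum, hq1, one_mul]
      _ = _ := by
          rw [Finset.sum_add_distrib, ← Finset.sum_mul, hp1, one_mul]
  have term1a : (ptraceB ρ * mlog (ptraceB ρ)).trace.re = ∑ i, p i * Real.log (p i) := by
    conv_lhs => rw [hAspec]
    rw [trace_mul_mlog _ hUU hUU']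
    exact Complex.ofReal_re _
  have term2 : ((ptraceB ρ ⊗ₖ σ) * mlog ρ).trace.re
      = ∑ j, ∑ m, q j * x m * Complex.normSq (T j m) := by
    rw [trace_kron_mlog, hσdef]
    conv_lhs => rw [hXspec]
    rw [trace_two_conj V W hVV hVV' hWW q x]
    exact Complex.ofReal_re _
  -- put everything together
  rw [Matrix.mul_sub, Matrix.trace_sub, Complex.sub_re, term1, term2, term1a, split1, hZre]
  have hlogr : ∀ m, Real.log (Real.exp (x m) / Z) = x m - Real.log Z := by
    intro m
    rw [Real.log_div (Real.exp_pos _).ne' hZpos.ne', Real.log_exp]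
  have hr1 : ∑ m, Real.exp (x m) / Z = 1 := by
    rw [← Finset.sum_div]
    exact div_self hZpos.ne'
  have hcol2 : ∑ j, ∑ m, Real.exp (x m) / Z * Complex.normSq (T j m) = 1 := by
    rw [Finset.sum_comm]
    calc ∑ m, ∑ j, Real.exp (x m) / Z * Complex.normSq (T j m)
        = ∑ m, Real.exp (x m) / Z * ∑ j, Complex.normSq (T j m) := by
          exact Finset.sum_congr rfl fun m _ => (Finset.mul_sum _ _ _).symm
      _ = ∑ m, Real.exp (x m) / Z := by
          exact Finset.sum_congr rfl fun m _ => by rw [hPcol m, mul_one]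
      _ = 1 := hr1
  have hj : ∀ j, ∑ m, Complex.normSq (T j m)
        * (q j * (Real.log (q j) - Real.log (Real.exp (x m) / Z))
          - (q j - Real.exp (x m) / Z))
      = (q j * Real.log (q j) + q j * Real.log Z - q j)
        + ((∑ m, Real.exp (x m) / Z * Complex.normSq (T j m))
          - ∑ m, q j * x m * Complex.normSq (T j m)) := by
    intro j
    calc ∑ m, Complex.normSq (T j m)
          * (q j * (Real.log (q j) - Real.log (Real.exp (x m) / Z))
            - (q j - Real.exp (x m) / Z))
        = ∑ m, ((q j * Real.log (q j) + q j * Real.log Z - q j) * Complex.normSq (T j m)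
            + (Real.exp (x m) / Z * Complex.normSq (T j m)
              - q j * x m * Complex.normSq (T j m))) := by
          refine Finset.sum_congr rfl fun m _ => ?_
          rw [hlogr m]
          ring
      _ = (q j * Real.log (q j) + q j * Real.log Z - q j) * (∑ m, Complex.normSq (T j m))
          + ((∑ m, Real.exp (x m) / Z * Complex.normSq (T j m))
            - ∑ m, q j * x m * Complex.normSq (T j m)) := by
          rw [Finset.sum_add_distrib, ← Finset.mul_sum, Finset.sum_sub_distrib]
      _ = _ := by rw [hProw j, mul_one]
  rw [Finset.sum_congr rfl fun j _ => hj j]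
  have e2 : ∑ j, ((q j * Real.log (q j) + q j * Real.log Z - q j)
      + ((∑ m, Real.exp (x m) / Z * Complex.normSq (T j m))
        - ∑ m, q j * x m * Complex.normSq (T j m)))
      = ((∑ j, q j * Real.log (q j)) + Real.log Z - 1)
        + (1 - ∑ j, ∑ m, q j * x m * Complex.normSq (T j m)) := by
    rw [Finset.sum_add_distrib]
    congr 1
    · rw [Finset.sum_sub_distrib, Finset.sum_add_distrib, ← Finset.sum_mul, hq1, one_mul]
    · rw [Finset.sum_sub_distrib, hcol2]
  rw [e2]
  ring
end Grand

section Marg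
variable {ρ : Matrix (a × b) (a × b) ℂ}

lemma marg_eq (hX : (Xop ρ).IsHermitian) :
    umlautMarginal ρ = (hX.eigenvectorUnitary : Matrix b b ℂ)
      * diagonal (Complex.ofReal ∘ fun m =>
          Real.exp (hX.eigenvalues m) / (mexp (Xop ρ)).trace.re)
      * (hX.eigenvectorUnitary : Matrix b b ℂ)ᴴ := by
  obtain ⟨hWW, hWW'⟩ := mem_unitary_pair hX.eigenvectorUnitary.2
  rw [umlautMarginal]
  set Z : ℝ := (mexp (Xop ρ)).trace.re with hZ
  rw [mexp, cfc_herm hX]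
  rw [← smul_mul_assoc, ← mul_smul_comm]
  congr 2
  ext i j
  by_cases h : i = j
  · subst h
    rw [Matrix.smul_apply, diagonal_apply_eq, diagonal_apply_eq]
    simp only [Function.comp_apply, Complex.real_smul, div_eq_inv_mul]
    push_cast
    ring
  · rw [Matrix.smul_apply, diagonal_apply_ne _ h, diagonal_apply_ne _ h, smul_zero]

lemma marg_density [Nonempty b] (hX : (Xop ρ).IsHermitian) (hZpos : 0 < (mexp (Xop ρ)).trace.re) :
    IsDensity (umlautMarginal ρ) := by
  obtain ⟨hWW, hWW'⟩ := mem_unitary_pair hX.eigenvectorUnitary.2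
  set W : Matrix b b ℂ := (hX.eigenvectorUnitary : Matrix b b ℂ)
  set Z : ℝ := (mexp (Xop ρ)).trace.re with hZ
  have hZval : Z = ∑ m, Real.exp (hX.eigenvalues m) := by
    rw [hZ, mexp_trace hX, Complex.ofReal_re]
  constructor
  · rw [marg_eq hX]
    set s : b → ℝ := fun m => Real.sqrt (Real.exp (hX.eigenvalues m) / Z) with hs
    have hsq : diagonal (Complex.ofReal ∘ fun m => Real.exp (hX.eigenvalues m) / Z)
        = diagonal (Complex.ofReal ∘ s) * (diagonal (Complex.ofReal ∘ s))ᴴ := by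
      rw [diagonal_conjTranspose, diagonal_mul_diagonal]
      ext i j
      by_cases h : i = j
      · subst h
        rw [diagonal_apply_eq, diagonal_apply_eq]
        simp only [Function.comp_apply, Pi.star_apply, Complex.star_def, Complex.conj_ofReal, hs]
        rw [← Complex.ofReal_mul, Real.mul_self_sqrt (by positivity)]
      · rw [diagonal_apply_ne _ h, diagonal_apply_ne _ h]
    rw [hsq]
    have hre : W * (diagonal (Complex.ofReal ∘ s) * (diagonal (Complex.ofReal ∘ s))ᴴ) * Wᴴ
        = (W * diagonal (Complex.ofReal ∘ s)) * (W * diagonal (Complex.ofReal ∘ s))ᴴ := by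
      rw [conjTranspose_mul]
      simp only [Matrix.mul_assoc]
    rw [hre]
    exact Matrix.posSemidef_self_mul_conjTranspose _
  · rw [marg_eq hX, trace_conj_diag _ hWW']
    have : ∑ m, ((Complex.ofReal ∘ fun m => Real.exp (hX.eigenvalues m) / Z) m)
        = ((∑ m, Real.exp (hX.eigenvalues m) / Z : ℝ) : ℂ) := by
      rw [Complex.ofReal_sum]
      rfl
    rw [this, ← Finset.sum_div]
    have hZZ : (∑ m, Real.exp (hX.eigenvalues m)) = Z := by
      rw [hZ, mexp_trace hX, Complex.ofReal_re]
    rw [hZZ, div_self hZpos.ne']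
    norm_cast

lemma matched_eq {V W : Matrix b b ℂ} (hVV : V * Vᴴ = 1) (hWW : W * Wᴴ = 1)
    (q r : b → ℝ) (h : ∀ j m, (Vᴴ * W) j m ≠ 0 → q j = r m) :
    V * diagonal (Complex.ofReal ∘ q) * Vᴴ = W * diagonal (Complex.ofReal ∘ r) * Wᴴ := by
  have hDT : diagonal (Complex.ofReal ∘ q) * (Vᴴ * W)
      = (Vᴴ * W) * diagonal (Complex.ofReal ∘ r) := by
    ext j m
    rw [Matrix.diagonal_mul, Matrix.mul_diagonal]
    by_cases ht : (Vᴴ * W) j m = 0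
    · rw [ht, mul_zero, zero_mul]
    · rw [Function.comp_apply, Function.comp_apply, h j m ht, mul_comm]
  calc V * diagonal (Complex.ofReal ∘ q) * Vᴴ
      = V * diagonal (Complex.ofReal ∘ q) * Vᴴ * (W * Wᴴ) := by rw [hWW, Matrix.mul_one]
    _ = V * (diagonal (Complex.ofReal ∘ q) * (Vᴴ * W)) * Wᴴ := by
        simp only [Matrix.mul_assoc]
    _ = V * ((Vᴴ * W) * diagonal (Complex.ofReal ∘ r)) * Wᴴ := by rw [hDT]
    _ = (V * Vᴴ) * (W * diagonal (Complex.ofReal ∘ r) * Wᴴ) := by simp only [Matrix.mul_assoc]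
    _ = W * diagonal (Complex.ofReal ∘ r) * Wᴴ := by rw [hVV, Matrix.one_mul]

lemma relEntropy_posdef (hρ : ρ.PosDef) (M : Matrix (a × b) (a × b) ℂ) :
    relEntropy M ρ = (((M * (mlog M - mlog ρ)).trace.re : ℝ) : EReal) := by
  rw [relEntropy, if_pos]
  intro v hv
  rw [posdef_mulVec_eq_zero hρ hv, Matrix.mulVec_zero]
end Marg

/-- closed form for the quantum umlaut information and uniqueness of the
minimiser (the umlaut-marginal), for a full-support state. -/
theorem umlaut_closed_form (ρ : Matrix (a × b) (a × b) ℂ) (hρ : ρ.PosDef)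
    (htr : ρ.trace = 1) :
    umlaut ρ = ((((ptraceB ρ * mlog (ptraceB ρ)).trace.re
        - Real.log ((mexp (Xop ρ)).trace.re) : ℝ)) : EReal) ∧
    ∀ σ : Matrix b b ℂ, IsDensity σ →
      (relEntropy (ptraceB ρ ⊗ₖ σ) ρ = umlaut ρ ↔ σ = umlautMarginal ρ) := by
  classical
  have hne : Nonempty (a × b) := by
    by_contra h
    rw [not_nonempty_iff] at h
    have h0 : ρ.trace = 0 := by simp [Matrix.trace]
    rw [h0] at htr
    exact one_ne_zero htr.symm
  have hna : Nonempty a := ⟨hne.some.1⟩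
  have hnb : Nonempty b := ⟨hne.some.2⟩
  have hApd : (ptraceB ρ).PosDef := ptraceB_posDef hρ
  have hX : (Xop ρ).IsHermitian := Xop_isHermitian hρ.1 hApd.1
  obtain ⟨hWW, hWW'⟩ := mem_unitary_pair hX.eigenvectorUnitary.2
  have hZval : (mexp (Xop ρ)).trace.re = ∑ m, Real.exp (hX.eigenvalues m) := by
    rw [mexp_trace hX, Complex.ofReal_re]
  have hZpos : 0 < (mexp (Xop ρ)).trace.re := by
    rw [hZval]
    exact Finset.sum_pos (fun m _ => Real.exp_pos _) Finset.univ_nonempty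
  set Z : ℝ := (mexp (Xop ρ)).trace.re with hZ
  have hr0 : ∀ m, 0 < Real.exp (hX.eigenvalues m) / Z :=
    fun m => div_pos (Real.exp_pos _) hZpos
  have hr1 : ∑ m, Real.exp (hX.eigenvalues m) / Z = 1 := by
    rw [← Finset.sum_div, ← hZval, div_self hZpos.ne']
  set C : ℝ := (ptraceB ρ * mlog (ptraceB ρ)).trace.re - Real.log Z with hC
  -- value at the umlaut marginal
  have at_marg : ((ptraceB ρ ⊗ₖ umlautMarginal ρ)
      * (mlog (ptraceB ρ ⊗ₖ umlautMarginal ρ) - mlog ρ)).trace.re = C := by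
    rw [marg_eq hX]
    rw [grand hρ htr hX _ hWW hWW' (fun m => Real.exp (hX.eigenvalues m) / Z)
      (fun m => (hr0 m).le) hr1]
    rw [hC]
    have hzero : ∑ j, ∑ m, Complex.normSq
        (((hX.eigenvectorUnitary : Matrix b b ℂ)ᴴ * (hX.eigenvectorUnitary : Matrix b b ℂ)) j m)
        * ((Real.exp (hX.eigenvalues j) / Z)
            * (Real.log (Real.exp (hX.eigenvalues j) / Z)
              - Real.log (Real.exp (hX.eigenvalues m) / Z))
          - (Real.exp (hX.eigenvalues j) / Z - Real.exp (hX.eigenvalues m) / Z)) = 0 := by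
      apply Finset.sum_eq_zero
      intro j _
      apply Finset.sum_eq_zero
      intro m _
      by_cases h : j = m
      · subst h
        have h0 : Real.exp (hX.eigenvalues j) / Z
              * (Real.log (Real.exp (hX.eigenvalues j) / Z)
                - Real.log (Real.exp (hX.eigenvalues j) / Z))
            - (Real.exp (hX.eigenvalues j) / Z - Real.exp (hX.eigenvalues j) / Z) = 0 := by
          ring
        rw [h0, mul_zero]
      · rw [hWW', Matrix.one_apply_ne h]
        simp
    rw [hzero, add_zero]
  -- lower bound and uniqueness for arbitrary densities
  have decomp : ∀ σ : Matrix b b ℂ, IsDensity σ →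
      ∀ (G : Prop), (∀ (V : Matrix b b ℂ) (hVV : V * Vᴴ = 1) (hVV' : Vᴴ * V = 1) (q : b → ℝ),
        (∀ j, 0 ≤ q j) → (∑ j, q j = 1) →
        σ = V * diagonal (Complex.ofReal ∘ q) * Vᴴ → G) → G := by
    intro σ hσ G hG
    have hσH : σ.IsHermitian := hσ.1.1
    obtain ⟨hVV, hVV'⟩ := mem_unitary_pair hσH.eigenvectorUnitary.2
    have hspec' : σ = (hσH.eigenvectorUnitary : Matrix b b ℂ)
        * diagonal (Complex.ofReal ∘ hσH.eigenvalues)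
        * (hσH.eigenvectorUnitary : Matrix b b ℂ)ᴴ := hσH.spectral_theorem
    refine hG _ hVV hVV' hσH.eigenvalues (fun j => hσ.1.eigenvalues_nonneg j) ?_ hspec'
    have h1 : σ.trace = 1 := hσ.2
    rw [hspec', trace_conj_diag _ hVV'] at h1
    have h2 : ((∑ i, hσH.eigenvalues i : ℝ) : ℂ) = 1 := by
      rw [Complex.ofReal_sum]
      exact h1
    exact_mod_cast h2
  have lower : ∀ σ : Matrix b b ℂ, IsDensity σ →
      C ≤ ((ptraceB ρ ⊗ₖ σ) * (mlog (ptraceB ρ ⊗ₖ σ) - mlog ρ)).trace.re := by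
    intro σ hσ
    refine decomp σ hσ _ (fun V hVV hVV' q hq hq1 hspec => ?_)
    rw [hspec, grand hρ htr hX V hVV hVV' q hq hq1, hC]
    have : 0 ≤ ∑ j, ∑ m, Complex.normSq
        ((Vᴴ * (hX.eigenvectorUnitary : Matrix b b ℂ)) j m)
        * (q j * (Real.log (q j) - Real.log (Real.exp (hX.eigenvalues m) / Z))
          - (q j - Real.exp (hX.eigenvalues m) / Z)) := by
      apply Finset.sum_nonneg
      intro j _
      apply Finset.sum_nonneg
      intro m _
      apply mul_nonneg (Complex.normSq_nonneg _)
      have := klein_le (hq j) (hr0 m)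
      linarith
    linarith
  have uniq : ∀ σ : Matrix b b ℂ, IsDensity σ →
      ((ptraceB ρ ⊗ₖ σ) * (mlog (ptraceB ρ ⊗ₖ σ) - mlog ρ)).trace.re = C →
      σ = umlautMarginal ρ := by
    intro σ hσ hval
    refine decomp σ hσ _ (fun V hVV hVV' q hq hq1 hspec => ?_)
    rw [hspec, grand hρ htr hX V hVV hVV' q hq hq1, hC] at hval
    have hsum0 : ∑ j, ∑ m, Complex.normSq
        ((Vᴴ * (hX.eigenvectorUnitary : Matrix b b ℂ)) j m)
        * (q j * (Real.log (q j) - Real.log (Real.exp (hX.eigenvalues m) / Z))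
          - (q j - Real.exp (hX.eigenvalues m) / Z)) = 0 := by linarith
    have hterm : ∀ j m, (Vᴴ * (hX.eigenvectorUnitary : Matrix b b ℂ)) j m ≠ 0 →
        q j = Real.exp (hX.eigenvalues m) / Z := by
      intro j m hjm
      have htnn : ∀ j m, 0 ≤ Complex.normSq
          ((Vᴴ * (hX.eigenvectorUnitary : Matrix b b ℂ)) j m)
          * (q j * (Real.log (q j) - Real.log (Real.exp (hX.eigenvalues m) / Z))
            - (q j - Real.exp (hX.eigenvalues m) / Z)) := by
        intro j m
        apply mul_nonneg (Complex.normSq_nonneg _)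
        have := klein_le (hq j) (hr0 m)
        linarith
      have h1 := (Finset.sum_eq_zero_iff_of_nonneg
        (fun j _ => Finset.sum_nonneg (fun m _ => htnn j m))).mp hsum0 j (Finset.mem_univ j)
      have h2 := (Finset.sum_eq_zero_iff_of_nonneg (fun m _ => htnn j m)).mp h1 m
        (Finset.mem_univ m)
      have h3 : q j * (Real.log (q j) - Real.log (Real.exp (hX.eigenvalues m) / Z))
          - (q j - Real.exp (hX.eigenvalues m) / Z) = 0 := by
        rcases mul_eq_zero.mp h2 with h | h
        · exact absurd (Complex.normSq_eq_zero.mp h) hjm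
        · exact h
      exact klein_eq (hq j) (hr0 m) h3
    rw [hspec, marg_eq hX]
    exact matched_eq hVV hWW q (fun m => Real.exp (hX.eigenvalues m) / Z) hterm
  -- conclude
  have humlaut : umlaut ρ = ((C : ℝ) : EReal) := by
    refine le_antisymm ?_ ?_
    · have hle := iInf_le (fun σ : {σ : Matrix b b ℂ // IsDensity σ} =>
        relEntropy (ptraceB ρ ⊗ₖ σ.1) ρ) ⟨umlautMarginal ρ, marg_density hX hZpos⟩
      rw [umlaut]
      refine le_trans hle ?_
      rw [relEntropy_posdef hρ, at_marg]
    · rw [umlaut]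
      apply le_iInf
      intro σ
      rw [relEntropy_posdef hρ]
      exact_mod_cast lower σ.1 σ.2
  refine ⟨by rw [humlaut], ?_⟩
  intro σ hσ
  rw [relEntropy_posdef hρ, humlaut]
  constructor
  · intro h
    have h' : ((ptraceB ρ ⊗ₖ σ) * (mlog (ptraceB ρ ⊗ₖ σ) - mlog ρ)).trace.re = C := by
      exact_mod_cast h
    exact uniq σ hσ h'
  · rintro rfl
    rw [at_marg]

end
end

section
/- Lower bound on the classical-quantum umlaut information by k-point lower umlaut information: for any k ≥ 1 and any q ∈ ℝ^k with Σᵢ qᵢ = 1, and for any probability distribution P_X, the umlaut information of the CQ state ρ_{X'B} = Σ_x P_X(x)|x⟩⟨x| ⊗ ρ_x satisfies U(X';B)_ρ ≥ Σ_{x1,...,xk} P_X(x1)···P_X(xk) (−log Tr[exp(Σᵢ qᵢ log ρ_{xᵢ})]). -/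
open scoped Kronecker ComplexOrder Classical
open Matrix

noncomputable section

variable {n a b : Type*} [Fintype n] [DecidableEq n]
  [Fintype a] [DecidableEq a] [Fintype b] [DecidableEq b]

/-- The classical-quantum state `Σ_x P(x) |x⟩⟨x| ⊗ ρ_x`. -/
def cqState {X : Type*} [Fintype X] [DecidableEq X] (P : X → ℝ) (ρ : X → Matrix b b ℂ) :
    Matrix (X × b) (X × b) ℂ :=
  ∑ x : X, ((P x : ℝ) : ℂ) • (Matrix.single x x 1 ⊗ₖ ρ x)

/-- The umlaut information of a classical-quantum channel `x ↦ ρ_x`. -/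
def cqUmlaut {X : Type*} [Fintype X] [DecidableEq X] (ρ : X → Matrix b b ℂ) : EReal :=
  ⨆ P : {P : X → ℝ // (∀ x, 0 ≤ P x) ∧ ∑ x, P x = 1}, umlaut (cqState P.1 ρ)

/-! ### Auxiliary lemmas -/

section Aux

lemma continuousOn_of_finite' {s : Set ℝ} (hs : s.Finite) (f : ℝ → ℝ) : ContinuousOn f s := by
  have : Finite s := hs
  rw [continuousOn_iff_continuous_restrict]
  exact continuous_of_discreteTopology

variable {d : Type*} [Fintype d] [DecidableEq d]

lemma matCont (A : Matrix d d ℂ) (f : ℝ → ℝ) : ContinuousOn f (spectrum ℝ A) :=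
  continuousOn_of_finite' (Matrix.finite_real_spectrum (A := A)) f

lemma matContIm (A : Matrix d d ℂ) (g : ℝ → ℝ) (f : ℝ → ℝ) :
    ContinuousOn f (g '' spectrum ℝ A) :=
  continuousOn_of_finite' ((Matrix.finite_real_spectrum (A := A)).image g) f

lemma trace_cfc_re (f : ℝ → ℝ) (A : Matrix d d ℂ) (hA : A.IsHermitian) :
    (cfc f A).trace.re = ∑ i, f (hA.eigenvalues i) := by
  have : (cfc f A).trace = ∑ i, ((f (hA.eigenvalues i) : ℝ) : ℂ) := by
    rw [hA.cfc_eq, Matrix.IsHermitian.cfc, Unitary.conjStarAlgAut_apply, Matrix.trace_mul_cycle,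
      Unitary.coe_star_mul_self hA.eigenvectorUnitary, one_mul, Matrix.trace_diagonal]
    rfl
  rw [this]
  simp

lemma sum_eigs_eq (A : Matrix d d ℂ) (hA : A.IsHermitian) :
    ∑ i, hA.eigenvalues i = A.trace.re := by
  have h := trace_cfc_re id A hA
  have h2 : cfc (id : ℝ → ℝ) A = A := cfc_id ℝ A hA
  rw [h2] at h
  simpa using h.symm

lemma gibbs_classical {ι : Type*} [Fintype ι] (s c : ι → ℝ) (hs0 : ∀ i, 0 ≤ s i)
    (hs1 : ∑ i, s i = 1) :
    -Real.log (∑ i, Real.exp (c i)) ≤ ∑ i, (s i * Real.log (s i) - s i * c i) := by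
  rcases isEmpty_or_nonempty ι with h | h
  · simp at hs1
  have hZ : 0 < ∑ i, Real.exp (c i) :=
    Finset.sum_pos (fun i _ => Real.exp_pos _) Finset.univ_nonempty
  set Z := ∑ i, Real.exp (c i) with hZdef
  have key : ∀ i, s i * Real.log (Real.exp (c i) / Z) - s i * Real.log (s i)
      ≤ Real.exp (c i) / Z - s i := by
    intro i
    rcases eq_or_lt_of_le (hs0 i) with hsi | hsi
    · simp [← hsi]
      positivity
    · have ht : 0 < Real.exp (c i) / Z := by positivity
      have h1 : Real.log (Real.exp (c i) / Z) - Real.log (s i)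
          = Real.log (Real.exp (c i) / Z / s i) := by
        rw [Real.log_div (ne_of_gt ht) (ne_of_gt hsi)]
      have h2 : Real.log (Real.exp (c i) / Z / s i) ≤ Real.exp (c i) / Z / s i - 1 :=
        Real.log_le_sub_one_of_pos (by positivity)
      calc s i * Real.log (Real.exp (c i) / Z) - s i * Real.log (s i)
          = s i * Real.log (Real.exp (c i) / Z / s i) := by rw [← mul_sub, h1]
        _ ≤ s i * (Real.exp (c i) / Z / s i - 1) := by
            exact mul_le_mul_of_nonneg_left h2 (le_of_lt hsi)
        _ = s i * (Real.exp (c i) / Z / s i) - s i := by ring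
        _ = Real.exp (c i) / Z - s i := by
            rw [mul_comm, div_mul_cancel₀ _ (ne_of_gt hsi)]
  have hsum : ∑ i, (s i * Real.log (Real.exp (c i) / Z) - s i * Real.log (s i)) ≤ 0 := by
    calc ∑ i, (s i * Real.log (Real.exp (c i) / Z) - s i * Real.log (s i))
        ≤ ∑ i, (Real.exp (c i) / Z - s i) := Finset.sum_le_sum (fun i _ => key i)
      _ = (∑ i, Real.exp (c i)) / Z - 1 := by rw [Finset.sum_sub_distrib, hs1, ← Finset.sum_div]
      _ = 0 := by field_simp; rw [hZdef]; ring
  have hlog : ∀ i, s i * Real.log (Real.exp (c i) / Z) = s i * c i - s i * Real.log Z := by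
    intro i
    rw [Real.log_div (Real.exp_ne_zero _) (ne_of_gt hZ), Real.log_exp, mul_sub]
  simp only [hlog] at hsum
  have h0 : ∑ i, (s i * c i - s i * Real.log Z - s i * Real.log (s i)) ≤ 0 := hsum
  rw [Finset.sum_sub_distrib, Finset.sum_sub_distrib, ← Finset.sum_mul, hs1] at h0
  have h0' := sub_nonpos.mp h0
  linarith [h0', Finset.sum_sub_distrib (f := fun i => s i * Real.log (s i))
    (g := fun i => s i * c i) (s := Finset.univ)]

lemma gibbs_quantum (σ H : Matrix d d ℂ) (hσ : σ.PosSemidef) (hσ1 : σ.trace = 1)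
    (hH : H.IsHermitian) :
    -Real.log ((mexp H).trace.re) ≤ (σ * mlog σ).trace.re - (σ * H).trace.re := by
  have hσh : σ.IsHermitian := hσ.1
  set s : d → ℝ := hσh.eigenvalues with hsdef
  have hs0 : ∀ i, 0 ≤ s i := hσ.eigenvalues_nonneg
  have hs1 : ∑ i, s i = 1 := by rw [sum_eigs_eq σ hσh, hσ1]; simp
  rcases isEmpty_or_nonempty d with hd | hd
  · exfalso; simp at hs1
  have hm : σ * mlog σ = cfc (fun t : ℝ => t * Real.log t) σ := by
    have e : cfc (fun t : ℝ => t * Real.log t) σ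
        = cfc (fun t : ℝ => t) σ * cfc Real.log σ :=
      cfc_mul _ _ σ (matCont σ _) (matCont σ _)
    have hσsa : IsSelfAdjoint σ := hσh
    have e2 : cfc (fun t : ℝ => t) σ = σ := cfc_id' ℝ σ
    rw [e, e2]; rfl
  have h1 : (σ * mlog σ).trace.re = ∑ i, s i * Real.log (s i) := by
    rw [hm, trace_cfc_re _ σ hσh]
  set U : Matrix d d ℂ := (hσh.eigenvectorUnitary : Matrix d d ℂ) with hUdef
  set V : Matrix d d ℂ := (hH.eigenvectorUnitary : Matrix d d ℂ) with hVdef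
  set h : d → ℝ := hH.eigenvalues with hhdef
  set M : Matrix d d ℂ := star U * H * U with hMdef
  set c : d → ℝ := fun i => (M i i).re with hcdef
  have hUU : star U * U = 1 := Unitary.coe_star_mul_self hσh.eigenvectorUnitary
  have hUU' : U * star U = 1 := Unitary.coe_mul_star_self hσh.eigenvectorUnitary
  have hVV : star V * V = 1 := Unitary.coe_star_mul_self hH.eigenvectorUnitary
  have hVV' : V * star V = 1 := Unitary.coe_mul_star_self hH.eigenvectorUnitary
  have h2 : (σ * H).trace.re = ∑ i, s i * c i := by
    have hspec : σ = U * diagonal (RCLike.ofReal ∘ s) * star U := hσh.spectral_theorem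
    have e1 : σ * H = U * (diagonal (RCLike.ofReal ∘ s) * (star U * H)) := by
      rw [hspec]; simp only [mul_assoc]
    have e2 : (σ * H).trace = (diagonal (RCLike.ofReal ∘ s) * M).trace := by
      rw [e1, Matrix.trace_mul_comm, hMdef]
      congr 1
      simp only [mul_assoc]
    rw [e2, Matrix.trace]
    simp only [Matrix.diag_apply, Matrix.diagonal_mul, Complex.re_sum]
    apply Finset.sum_congr rfl
    intro i _
    show ((s i : ℝ) : ℂ).re * (M i i).re - ((s i : ℝ) : ℂ).im * (M i i).im = s i * c i
    simp [hcdef]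
  have h3 : (mexp H).trace.re = ∑ j, Real.exp (h j) := trace_cfc_re Real.exp H hH
  set W : Matrix d d ℂ := star V * U with hWdef
  set p : d → d → ℝ := fun j i => Complex.normSq (W j i) with hpdef
  have hp0 : ∀ j i, 0 ≤ p j i := fun j i => Complex.normSq_nonneg _
  have hWl : star W * W = 1 := by
    calc star W * W = star U * (V * star V) * U := by
          rw [hWdef, StarMul.star_mul, star_star]; simp only [mul_assoc]
      _ = 1 := by rw [hVV', mul_one, hUU]
  have hWr : W * star W = 1 := by
    calc W * star W = star V * (U * star U) * V := by
          rw [hWdef, StarMul.star_mul, star_star]; simp only [mul_assoc]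
      _ = 1 := by rw [hUU', mul_one, hVV]
  have hcol : ∀ i, ∑ j, p j i = 1 := by
    intro i
    have := congrArg (fun A : Matrix d d ℂ => (A i i).re) hWl
    simp only [Matrix.mul_apply, Matrix.one_apply_eq, Complex.one_re, Matrix.star_apply,
      Complex.re_sum] at this
    rw [← this]
    apply Finset.sum_congr rfl
    intro j _
    have e : star (W j i) * W j i = (Complex.normSq (W j i) : ℂ) := by
      simp [Complex.normSq_eq_conj_mul_self]
    simp [hpdef, e, Complex.normSq_apply]
  have hrow : ∀ j, ∑ i, p j i = 1 := by
    intro j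
    have := congrArg (fun A : Matrix d d ℂ => (A j j).re) hWr
    simp only [Matrix.mul_apply, Matrix.one_apply_eq, Complex.one_re, Matrix.star_apply,
      Complex.re_sum] at this
    rw [← this]
    apply Finset.sum_congr rfl
    intro i _
    have e : W j i * star (W j i) = (Complex.normSq (W j i) : ℂ) := by
      simp [Complex.mul_conj]
    simp [hpdef, e, Complex.normSq_apply]
  have hc : ∀ i, c i = ∑ j, h j * p j i := by
    intro i
    have hspecH : H = V * diagonal (RCLike.ofReal ∘ h) * star V := hH.spectral_theorem
    have eM : M = star W * (diagonal (RCLike.ofReal ∘ h) * W) := by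
      rw [hMdef, hWdef, StarMul.star_mul, star_star, hspecH]
      simp only [mul_assoc]
    have expand : M i i = ∑ j, star (W j i) * (((h j : ℝ) : ℂ) * W j i) := by
      rw [eM, Matrix.mul_apply]
      apply Finset.sum_congr rfl
      intro j _
      rw [Matrix.diagonal_mul, Matrix.star_apply]
      rfl
    rw [hcdef]
    show (M i i).re = _
    rw [expand, Complex.re_sum]
    apply Finset.sum_congr rfl
    intro j _
    have e : star (W j i) * (((h j : ℝ) : ℂ) * W j i)
        = ((h j : ℝ) : ℂ) * (Complex.normSq (W j i) : ℂ) := by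
      rw [show star (W j i) * (((h j : ℝ) : ℂ) * W j i)
          = ((h j : ℝ) : ℂ) * (star (W j i) * W j i) from by ring]
      congr 1
      exact (Complex.normSq_eq_conj_mul_self).symm
    rw [e, ← Complex.ofReal_mul]
    simp [hpdef]
  have hjensen : ∀ i, Real.exp (c i) ≤ ∑ j, p j i * Real.exp (h j) := by
    intro i
    have := convexOn_exp.map_sum_le (t := Finset.univ) (w := fun j => p j i) (p := h)
      (fun j _ => hp0 j i) (hcol i) (fun j _ => Set.mem_univ _)
    simp only [smul_eq_mul] at this
    have hceq : c i = ∑ j, p j i * h j := by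
      rw [hc i]; apply Finset.sum_congr rfl; intro j _; ring
    rw [hceq]
    exact this
  have h4 : ∑ i, Real.exp (c i) ≤ ∑ j, Real.exp (h j) := by
    calc ∑ i, Real.exp (c i) ≤ ∑ i, ∑ j, p j i * Real.exp (h j) :=
          Finset.sum_le_sum (fun i _ => hjensen i)
      _ = ∑ j, (∑ i, p j i) * Real.exp (h j) := by
          rw [Finset.sum_comm]
          apply Finset.sum_congr rfl
          intro j _
          rw [Finset.sum_mul]
      _ = ∑ j, Real.exp (h j) := by
          apply Finset.sum_congr rfl
          intro j _
          rw [hrow j, one_mul]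
  have hpos : (0:ℝ) < ∑ i, Real.exp (c i) :=
    Finset.sum_pos (fun i _ => Real.exp_pos _) Finset.univ_nonempty
  have h5 : -Real.log ((mexp H).trace.re) ≤ -Real.log (∑ i, Real.exp (c i)) := by
    rw [h3]
    exact neg_le_neg (Real.log_le_log hpos h4)
  calc -Real.log ((mexp H).trace.re) ≤ -Real.log (∑ i, Real.exp (c i)) := h5
    _ ≤ ∑ i, (s i * Real.log (s i) - s i * c i) := gibbs_classical s c hs0 hs1
    _ = (σ * mlog σ).trace.re - (σ * H).trace.re := by
        rw [h1, h2, Finset.sum_sub_distrib]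

end Aux

section Aux2
open Polynomial
variable {d : Type*} [Fintype d] [DecidableEq d]

lemma spectrum_nonneg_of_psd (σ : Matrix d d ℂ) (hσ : σ.PosSemidef) :
    ∀ t ∈ spectrum ℝ σ, 0 ≤ t := by
  intro t ht
  rw [Matrix.IsHermitian.spectrum_real_eq_range_eigenvalues hσ.1] at ht
  obtain ⟨i, rfl⟩ := ht
  exact hσ.eigenvalues_nonneg i

lemma spectrum_pos_of_pd (ρ : Matrix d d ℂ) (hρ : ρ.PosDef) :
    ∀ t ∈ spectrum ℝ ρ, 0 < t := by
  intro t ht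
  rw [Matrix.IsHermitian.spectrum_real_eq_range_eigenvalues hρ.1] at ht
  obtain ⟨i, rfl⟩ := ht
  exact hρ.eigenvalues_pos i

lemma mul_mlog_eq (A : Matrix d d ℂ) (hA : A.IsHermitian) :
    A * mlog A = cfc (fun t : ℝ => t * Real.log t) A := by
  have hsa : IsSelfAdjoint A := hA
  have e : cfc (fun t : ℝ => t * Real.log t) A
      = cfc (fun t : ℝ => t) A * cfc Real.log A :=
    cfc_mul _ _ A (matCont A _) (matCont A _)
  have e2 : cfc (fun t : ℝ => t) A = A := cfc_id' ℝ A
  rw [e, e2]; rfl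

lemma mlog_smul_comp (A : Matrix d d ℂ) (hA : A.IsHermitian) (P : ℝ) :
    mlog (P • A) = cfc (fun t : ℝ => Real.log (P * t)) A := by
  have hsa : IsSelfAdjoint A := hA
  have h1 : P • A = cfc (fun t : ℝ => P * t) A := (cfc_const_mul_id P A hsa).symm
  rw [mlog, h1, ← cfc_comp' Real.log (fun t : ℝ => P * t) A (matContIm A _ _) (matCont A _) hsa]

lemma smul_hermitian (A : Matrix d d ℂ) (hA : A.IsHermitian) (P : ℝ) :
    IsSelfAdjoint (P • A) := by
  have hsa : IsSelfAdjoint A := hA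
  exact IsSelfAdjoint.smul (star_trivial P) hsa

lemma SC (σ : Matrix d d ℂ) (hσ : σ.PosSemidef) (hσ1 : σ.trace = 1) (P : ℝ) (hP : 0 ≤ P) :
    ((P • σ) * mlog (P • σ)).trace.re = P * Real.log P + P * ((σ * mlog σ).trace.re) := by
  have hσsa : IsSelfAdjoint σ := hσ.1
  have h1 : P • σ = cfc (fun t : ℝ => P * t) σ := (cfc_const_mul_id P σ hσsa).symm
  have h2 : (P • σ) * mlog (P • σ) = cfc (fun t : ℝ => (P * t) * Real.log (P * t)) σ := by
    rw [mlog_smul_comp σ hσ.1 P]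
    conv_lhs => rw [h1]
    rw [← cfc_mul _ _ σ (matCont σ _) (matCont σ _)]
  have h3 : cfc (fun t : ℝ => (P * t) * Real.log (P * t)) σ
      = cfc (fun t : ℝ => (P * Real.log P) * t + P * (t * Real.log t)) σ := by
    apply cfc_congr
    intro t ht
    have ht0 : 0 ≤ t := spectrum_nonneg_of_psd σ hσ t ht
    show (P * t) * Real.log (P * t) = (P * Real.log P) * t + P * (t * Real.log t)
    rcases eq_or_lt_of_le hP with hP0 | hP0
    · simp [← hP0]
    rcases eq_or_lt_of_le ht0 with ht0' | ht0'
    · simp [← ht0']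
    rw [Real.log_mul (ne_of_gt hP0) (ne_of_gt ht0')]
    ring
  have h4 : cfc (fun t : ℝ => (P * Real.log P) * t + P * (t * Real.log t)) σ
      = (P * Real.log P) • σ + P • (σ * mlog σ) := by
    rw [cfc_add σ (fun t : ℝ => (P * Real.log P) * t) (fun t : ℝ => P * (t * Real.log t))
      (matCont σ _) (matCont σ _)]
    rw [cfc_const_mul_id (P * Real.log P) σ hσsa,
      cfc_const_mul P (fun t : ℝ => t * Real.log t) σ (matCont σ _),
      mul_mlog_eq σ hσ.1]
  rw [h2, h3, h4]
  have e : ((P * Real.log P) • σ + P • (σ * mlog σ)).trace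
      = (P * Real.log P) • σ.trace + P • (σ * mlog σ).trace := by
    rw [Matrix.trace_add, Matrix.trace_smul, Matrix.trace_smul]
  rw [e, hσ1]
  simp [Complex.real_smul, Complex.add_re, Complex.mul_re]

lemma SH (ρ : Matrix d d ℂ) (hρ : ρ.PosDef) (P : ℝ) (hP : 0 < P) :
    mlog (P • ρ) = (Real.log P) • (1 : Matrix d d ℂ) + mlog ρ := by
  have hsa : IsSelfAdjoint ρ := hρ.1
  rw [mlog_smul_comp ρ hρ.1 P]
  have h1 : cfc (fun t : ℝ => Real.log (P * t)) ρ
      = cfc (fun t : ℝ => Real.log P + Real.log t) ρ := by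
    apply cfc_congr
    intro t ht
    have ht0 : 0 < t := spectrum_pos_of_pd ρ hρ t ht
    show Real.log (P * t) = Real.log P + Real.log t
    exact Real.log_mul (ne_of_gt hP) (ne_of_gt ht0)
  rw [h1, cfc_const_add (Real.log P) Real.log ρ (matCont ρ _) hsa,
    Algebra.algebraMap_eq_smul_one]
  rfl

end Aux2

section BlockDiag
open Polynomial
variable {X : Type*} [Fintype X] [DecidableEq X] {b : Type*} [Fintype b] [DecidableEq b]

/-- Block diagonal matrix with blocks `A x`. -/
def bd (A : X → Matrix b b ℂ) : Matrix (X × b) (X × b) ℂ :=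
  ∑ x, Matrix.single x x (1:ℂ) ⊗ₖ A x

lemma bd_apply (A : X → Matrix b b ℂ) (x1 x2 : X) (i j : b) :
    bd A (x1, i) (x2, j) = if x1 = x2 then A x1 i j else 0 := by
  rw [bd, Matrix.sum_apply]
  by_cases hx : x1 = x2
  · subst hx
    rw [if_pos rfl, Finset.sum_eq_single x1]
    · simp [Matrix.single]
    · intro y _ hy
      simp [Matrix.single, hy]
    · simp
  · rw [if_neg hx]
    apply Finset.sum_eq_zero
    intro y _
    have hny : ¬(y = x1 ∧ y = x2) := by rintro ⟨rfl, rfl⟩; exact hx rfl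
    simp [Matrix.single, hny]

lemma bd_mul (A B : X → Matrix b b ℂ) : bd A * bd B = bd (fun x => A x * B x) := by
  rw [bd, bd, Finset.sum_mul_sum]
  rw [show bd (fun x => A x * B x)
      = ∑ x, Matrix.single x x (1:ℂ) ⊗ₖ (A x * B x) from rfl]
  apply Finset.sum_congr rfl
  intro x _
  rw [Finset.sum_eq_single x]
  · rw [← Matrix.mul_kronecker_mul, Matrix.single_mul_single_same, one_mul]
  · intro y _ hy
    rw [← Matrix.mul_kronecker_mul, Matrix.single_mul_single_of_ne (h := Ne.symm hy)]
    simp [Matrix.zero_kronecker]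
  · simp

lemma bd_one : bd (fun _ : X => (1 : Matrix b b ℂ)) = 1 := by
  ext ⟨x1, i⟩ ⟨x2, j⟩
  rw [bd_apply]
  by_cases hx : x1 = x2
  · subst hx
    simp [Matrix.one_apply, Prod.ext_iff]
  · simp [Matrix.one_apply, Prod.ext_iff, hx]

lemma bd_add (A B : X → Matrix b b ℂ) : bd (fun x => A x + B x) = bd A + bd B := by
  ext ⟨x1, i⟩ ⟨x2, j⟩
  rw [Matrix.add_apply, bd_apply, bd_apply, bd_apply]
  split <;> simp

lemma bd_smul (r : ℝ) (A : X → Matrix b b ℂ) : bd (fun x => r • A x) = r • bd A := by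
  ext ⟨x1, i⟩ ⟨x2, j⟩
  rw [Matrix.smul_apply, bd_apply, bd_apply]
  split <;> simp

lemma bd_sub (A B : X → Matrix b b ℂ) : bd (fun x => A x - B x) = bd A - bd B := by
  ext ⟨x1, i⟩ ⟨x2, j⟩
  rw [Matrix.sub_apply, bd_apply, bd_apply, bd_apply]
  split <;> simp

/-- The block-diagonal embedding as an `ℝ`-algebra homomorphism. -/
def bdHom : (X → Matrix b b ℂ) →ₐ[ℝ] Matrix (X × b) (X × b) ℂ where
  toFun := bd
  map_one' := bd_one
  map_mul' A B := (bd_mul A B).symm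
  map_zero' := by
    show bd 0 = 0
    ext ⟨x1, i⟩ ⟨x2, j⟩
    rw [Matrix.zero_apply, bd_apply]
    split <;> rfl
  map_add' A B := bd_add A B
  commutes' r := by
    show bd ((algebraMap ℝ (X → Matrix b b ℂ)) r) = algebraMap ℝ _ r
    have h1 : (algebraMap ℝ (X → Matrix b b ℂ)) r = fun _ => r • (1 : Matrix b b ℂ) := by
      funext x
      simp [Algebra.algebraMap_eq_smul_one]
    rw [h1]
    rw [show (fun _ : X => r • (1 : Matrix b b ℂ))
        = fun x : X => r • (fun _ : X => (1 : Matrix b b ℂ)) x from rfl]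
    rw [bd_smul, bd_one, Algebra.algebraMap_eq_smul_one]

lemma bd_aeval (A : X → Matrix b b ℂ) (p : ℝ[X]) :
    aeval (bd A) p = bd (fun x => aeval (A x) p) := by
  have h1 : aeval (bdHom A) p = bdHom (aeval A p) := Polynomial.aeval_algHom_apply bdHom A p
  have h2 : ∀ x, (aeval A p) x = aeval (A x) p := by
    intro x
    exact (Polynomial.aeval_algHom_apply (Pi.evalAlgHom ℝ (fun _ => Matrix b b ℂ) x) A p).symm
  rw [show bd A = bdHom A from rfl, h1]
  show bd (aeval A p) = _
  have e : (aeval A p : X → Matrix b b ℂ) = fun x => aeval (A x) p := funext h2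
  rw [e]

lemma bd_sa (A : X → Matrix b b ℂ) (hA : ∀ x, _root_.IsSelfAdjoint (A x)) :
    _root_.IsSelfAdjoint (bd A) := by
  have e : star (bd A) = bd A := by
    ext ⟨x1, i⟩ ⟨x2, j⟩
    rw [Matrix.star_apply, bd_apply, bd_apply]
    by_cases hx : x1 = x2
    · subst hx
      rw [if_pos rfl, if_pos rfl]
      calc star (A x1 j i) = (star (A x1)) i j := (Matrix.star_apply _ _ _).symm
        _ = A x1 i j := by rw [(hA x1).star_eq]
    · rw [if_neg (fun h => hx h.symm), if_neg hx, star_zero]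
  exact e

lemma cfc_bd (f : ℝ → ℝ) (A : X → Matrix b b ℂ) (hA : ∀ x, _root_.IsSelfAdjoint (A x)) :
    cfc f (bd A) = bd (fun x => cfc f (A x)) := by
  have hSfin : (spectrum ℝ (bd A) ∪ ⋃ x, spectrum ℝ (A x)).Finite :=
    (Matrix.finite_real_spectrum).union (Set.finite_iUnion fun x => Matrix.finite_real_spectrum)
  set T : Finset ℝ := hSfin.toFinset with hT
  set p : ℝ[X] := Lagrange.interpolate T id f with hp
  have hnode : ∀ t ∈ T, p.eval t = f t := by
    intro t ht
    exact Lagrange.eval_interpolate_at_node f (Set.injOn_id _) ht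
  have hmem1 : ∀ t ∈ spectrum ℝ (bd A), t ∈ T := by
    intro t ht
    rw [hT, Set.Finite.mem_toFinset]
    exact Set.mem_union_left _ ht
  have hmem2 : ∀ x, ∀ t ∈ spectrum ℝ (A x), t ∈ T := by
    intro x t ht
    rw [hT, Set.Finite.mem_toFinset]
    exact Set.mem_union_right _ (Set.mem_iUnion.mpr ⟨x, ht⟩)
  have h1 : cfc f (bd A) = cfc (fun t => p.eval t) (bd A) :=
    cfc_congr (fun t ht => (hnode t (hmem1 t ht)).symm)
  have h2 : cfc (fun t => p.eval t) (bd A) = aeval (bd A) p :=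
    cfc_polynomial p (bd A) (bd_sa A hA)
  have h4 : ∀ x, aeval (A x) p = cfc f (A x) := by
    intro x
    rw [← cfc_polynomial p (A x) (hA x)]
    exact cfc_congr (fun t ht => hnode t (hmem2 x t ht))
  rw [h1, h2, bd_aeval]
  have e : (fun x => aeval (A x) p) = fun x => cfc f (A x) := funext h4
  rw [e]

lemma bd_trace (A : X → Matrix b b ℂ) : (bd A).trace = ∑ x, (A x).trace := by
  rw [bd, Matrix.trace_sum]
  apply Finset.sum_congr rfl
  intro x _
  rw [Matrix.trace_kronecker]
  have e : (Matrix.single x x (1:ℂ)).trace = 1 := by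
    rw [Matrix.trace]
    rw [show (Matrix.single x x (1:ℂ)).diag = Pi.single x 1 from
      Matrix.diag_single_same x 1]
    simp
  rw [e, one_mul]

end BlockDiag

section Marg
variable {X : Type*} [Fintype X]

lemma marg_one (k : ℕ) (P : X → ℝ) (hP1 : ∑ x, P x = 1) :
    ∑ xs : Fin k → X, (∏ j, P (xs j)) = 1 := by
  classical
  have h := Finset.prod_univ_sum (fun _ : Fin k => (Finset.univ : Finset X))
    (fun _ x => P x)
  rw [Fintype.piFinset_univ] at h
  rw [← h]
  simp [hP1]

lemma marg_r (k : ℕ) (P : X → ℝ) (hP1 : ∑ x, P x = 1) (r : X → ℝ) (i : Fin k) :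
    ∑ xs : Fin k → X, (∏ j, P (xs j)) * r (xs i) = ∑ x, P x * r x := by
  classical
  set h : Fin k → X → ℝ := fun j x => if j = i then P x * r x else P x with hh
  have e1 : ∀ xs : Fin k → X, (∏ j, P (xs j)) * r (xs i) = ∏ j, h j (xs j) := by
    intro xs
    have e : ∀ j, h j (xs j) = P (xs j) * (if j = i then r (xs j) else 1) := by
      intro j
      by_cases hj : j = i <;> simp [hh, hj]
    rw [Finset.prod_congr rfl (fun j _ => e j), Finset.prod_mul_distrib]
    congr 1
    rw [Finset.prod_ite_eq' Finset.univ i (fun j => r (xs j))]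
    simp
  have e2 := Finset.prod_univ_sum (fun _ : Fin k => (Finset.univ : Finset X)) h
  rw [Fintype.piFinset_univ] at e2
  calc ∑ xs : Fin k → X, (∏ j, P (xs j)) * r (xs i)
      = ∑ xs : Fin k → X, ∏ j, h j (xs j) := Finset.sum_congr rfl (fun xs _ => e1 xs)
    _ = ∏ j, ∑ x, h j x := e2.symm
    _ = ∑ x, P x * r x := by
        rw [Finset.prod_eq_single i]
        · simp [hh]
        · intro j _ hj
          simp [hh, hj, hP1]
        · simp

end Marg

section CQ
variable {X : Type*} [Fintype X] [DecidableEq X] {b : Type*} [Fintype b] [DecidableEq b]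

lemma cq_eq_bd (P : X → ℝ) (ρ : X → Matrix b b ℂ) :
    cqState P ρ = bd (fun x => P x • ρ x) := by
  rw [cqState, bd]
  apply Finset.sum_congr rfl
  intro x _
  ext ⟨y1, i⟩ ⟨y2, j⟩
  simp [Matrix.smul_apply, Complex.real_smul]
  ring

lemma ptraceB_cq (P : X → ℝ) (ρ : X → Matrix b b ℂ) (htr : ∀ x, (ρ x).trace = 1) :
    ptraceB (cqState P ρ) = Matrix.diagonal (fun x => ((P x : ℝ) : ℂ)) := by
  rw [cq_eq_bd]
  ext x1 x2
  rw [ptraceB, Matrix.of_apply, Matrix.diagonal_apply]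
  by_cases hx : x1 = x2
  · subst hx
    rw [if_pos rfl]
    calc ∑ k, bd (fun x => P x • ρ x) (x1, k) (x1, k)
        = ∑ k, (P x1 : ℂ) * (ρ x1 k k) := by
          apply Finset.sum_congr rfl
          intro k _
          rw [bd_apply, if_pos rfl, Matrix.smul_apply, Complex.real_smul]
      _ = (P x1 : ℂ) * (ρ x1).trace := by rw [← Finset.mul_sum]; rfl
      _ = (P x1 : ℂ) := by rw [htr x1, mul_one]
  · rw [if_neg hx]
    apply Finset.sum_eq_zero
    intro k _
    rw [bd_apply, if_neg hx]

lemma theta_eq (P : X → ℝ) (ρ : X → Matrix b b ℂ) (htr : ∀ x, (ρ x).trace = 1)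
    (σ : Matrix b b ℂ) :
    ptraceB (cqState P ρ) ⊗ₖ σ = bd (fun x => P x • σ) := by
  rw [ptraceB_cq P ρ htr]
  ext ⟨x1, i⟩ ⟨x2, j⟩
  rw [bd_apply]
  show Matrix.diagonal (fun x => ((P x : ℝ) : ℂ)) x1 x2 * σ i j = _
  rw [Matrix.diagonal_apply]
  by_cases hx : x1 = x2
  · subst hx
    rw [if_pos rfl, if_pos rfl, Matrix.smul_apply, Complex.real_smul]
  · rw [if_neg hx, if_neg hx, zero_mul]

end CQ

/-- the k-point lower umlaut information lower bounds the umlaut information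
of a classical-quantum state. -/
theorem cq_lower_umlaut_bound {X : Type*} [Fintype X] [DecidableEq X]
    (k : ℕ) (hk : 1 ≤ k) (q : Fin k → ℝ) (hq : ∑ i, q i = 1)
    (ρ : X → Matrix b b ℂ) (hρ : ∀ x, (ρ x).PosDef ∧ (ρ x).trace = 1)
    (P : X → ℝ) (hP0 : ∀ x, 0 ≤ P x) (hP1 : ∑ x, P x = 1) :
    ((∑ xs : Fin k → X, (∏ i, P (xs i)) *
        (-Real.log ((mexp (∑ i, q i • mlog (ρ (xs i)))).trace.re)) : ℝ) : EReal)
      ≤ umlaut (cqState P ρ) := by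
  classical
  unfold umlaut
  refine le_iInf fun σs => ?_
  obtain ⟨σ, hσpsd, hσtr⟩ := σs
  unfold relEntropy
  split_ifs with hsupp
  swap
  · exact le_top
  rw [EReal.coe_le_coe_iff]
  have hρh : ∀ x, (ρ x).IsHermitian := fun x => (hρ x).1.1
  have hρtr : ∀ x, (ρ x).trace = 1 := fun x => (hρ x).2
  set cσ : ℝ := (σ * mlog σ).trace.re with hcσ
  set r : X → ℝ := fun x => (σ * mlog (ρ x)).trace.re with hrdef
  -- Step C : the relative entropy equals ∑ x, P x * (cσ - r x)
  have hθ : ptraceB (cqState P ρ) ⊗ₖ σ = bd (fun x => P x • σ) := theta_eq P ρ hρtr σ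
  have hω : cqState P ρ = bd (fun x => P x • ρ x) := cq_eq_bd P ρ
  have hsaσ : ∀ x : X, IsSelfAdjoint (P x • σ) := fun x => smul_hermitian σ hσpsd.1 (P x)
  have hsaρ : ∀ x : X, IsSelfAdjoint (P x • ρ x) := fun x => smul_hermitian (ρ x) (hρh x) (P x)
  have hmlogθ : mlog (bd (fun x => P x • σ)) = bd (fun x => mlog (P x • σ)) := by
    unfold mlog; exact cfc_bd Real.log _ hsaσ
  have hmlogω : mlog (bd (fun x => P x • ρ x)) = bd (fun x => mlog (P x • ρ x)) := by
    unfold mlog; exact cfc_bd Real.log _ hsaρ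
  have hT : (((ptraceB (cqState P ρ) ⊗ₖ σ) *
      (mlog (ptraceB (cqState P ρ) ⊗ₖ σ) - mlog (cqState P ρ))).trace).re
      = ∑ x, P x * (cσ - r x) := by
    rw [hθ, hω, hmlogθ, hmlogω, ← bd_sub, bd_mul, bd_trace, Complex.re_sum]
    apply Finset.sum_congr rfl
    intro x _
    show (((P x • σ) * (mlog (P x • σ) - mlog (P x • ρ x))).trace).re = _
    have expand : (((P x • σ) * (mlog (P x • σ) - mlog (P x • ρ x))).trace).re
        = ((P x • σ) * mlog (P x • σ)).trace.re - ((P x • σ) * mlog (P x • ρ x)).trace.re := by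
      rw [mul_sub, Matrix.trace_sub, Complex.sub_re]
    rw [expand]
    have e1 : ((P x • σ) * mlog (P x • σ)).trace.re = P x * Real.log (P x) + P x * cσ :=
      SC σ hσpsd hσtr (P x) (hP0 x)
    have e2 : ((P x • σ) * mlog (P x • ρ x)).trace.re = P x * Real.log (P x) + P x * r x := by
      rcases eq_or_lt_of_le (hP0 x) with h0 | h0
      · rw [← h0]
        simp
      · rw [SH (ρ x) (hρ x).1 (P x) h0, mul_add]
        have ea : (P x • σ) * ((Real.log (P x)) • (1 : Matrix b b ℂ))
            = (P x * Real.log (P x)) • σ := by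
          rw [Matrix.mul_smul, Matrix.mul_one, smul_smul, mul_comm (Real.log (P x)) (P x)]
        have eb : (P x • σ) * mlog (ρ x) = P x • (σ * mlog (ρ x)) := smul_mul_assoc _ _ _
        rw [ea, eb, Matrix.trace_add, Matrix.trace_smul, Matrix.trace_smul, Complex.add_re,
          hσtr]
        simp [Complex.real_smul, Complex.mul_re, hrdef]
    rw [e1, e2]
    ring
  rw [hT]
  -- Step A : pointwise Gibbs bound
  have hgibbs : ∀ xs : Fin k → X,
      -Real.log ((mexp (∑ i, q i • mlog (ρ (xs i)))).trace.re)
        ≤ cσ - ∑ i, q i * r (xs i) := by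
    intro xs
    have hHsa : IsSelfAdjoint (∑ i, q i • mlog (ρ (xs i))) := by
      have e : star (∑ i, q i • mlog (ρ (xs i))) = ∑ i, q i • mlog (ρ (xs i))  := by
        rw [star_sum]
        apply Finset.sum_congr rfl
        intro i _
        rw [star_smul, star_trivial]
        congr 1
        exact (cfc_predicate Real.log (ρ (xs i))).star_eq
      exact e
    have hgq := gibbs_quantum σ (∑ i, q i • mlog (ρ (xs i))) hσpsd hσtr hHsa
    have htr2 : (σ * ∑ i, q i • mlog (ρ (xs i))).trace.re = ∑ i, q i * r (xs i) := by
      rw [Finset.mul_sum, Matrix.trace_sum, Complex.re_sum]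
      apply Finset.sum_congr rfl
      intro i _
      rw [mul_smul_comm, Matrix.trace_smul]
      simp [Complex.real_smul, Complex.mul_re, hrdef]
    rw [htr2] at hgq
    exact hgq
  -- Step B : average the bound
  calc ∑ xs : Fin k → X, (∏ i, P (xs i)) *
        (-Real.log ((mexp (∑ i, q i • mlog (ρ (xs i)))).trace.re))
      ≤ ∑ xs : Fin k → X, (∏ i, P (xs i)) * (cσ - ∑ i, q i * r (xs i)) := by
        apply Finset.sum_le_sum
        intro xs _
        exact mul_le_mul_of_nonneg_left (hgibbs xs)
          (Finset.prod_nonneg (fun i _ => hP0 (xs i)))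
    _ = ∑ x, P x * (cσ - r x) := by
        have lhs1 : ∀ xs : Fin k → X, (∏ i, P (xs i)) * (cσ - ∑ i, q i * r (xs i))
            = (∏ i, P (xs i)) * cσ - ∑ i, q i * ((∏ j, P (xs j)) * r (xs i)) := by
          intro xs
          rw [mul_sub, Finset.mul_sum]
          congr 1
          apply Finset.sum_congr rfl
          intro i _
          ring
        rw [Finset.sum_congr rfl (fun xs _ => lhs1 xs), Finset.sum_sub_distrib,
          ← Finset.sum_mul, marg_one k P hP1, one_mul, Finset.sum_comm]
        have e : ∀ i : Fin k, ∑ xs : Fin k → X, q i * ((∏ j, P (xs j)) * r (xs i))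
            = q i * (∑ x, P x * r x) := by
          intro i
          rw [← Finset.mul_sum, marg_r k P hP1 r i]
        rw [Finset.sum_congr rfl (fun i _ => e i), ← Finset.sum_mul, hq, one_mul]
        have e2 : ∑ x, P x * (cσ - r x) = ∑ x, (P x * cσ - P x * r x) :=
          Finset.sum_congr rfl (fun x _ => by ring)
        rw [e2, Finset.sum_sub_distrib, ← Finset.sum_mul, hP1, one_mul]


end
end
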